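/- arXiv:1912.11104 — 3 statements merged into one kernel-verified Lean document; each statement's English description precedes it below -/
import Mathlib

section
/- Let {e_L, e_R} be two color-0 edges of G not forming a 2-edge-cut. If there exist two distinct colors c_1, c_2 with F_{c_1}^{{e_L,e_R}}(G) = F_{c_2}^{{e_L,e_R}}(G) = 1, then there exists a flip of {e_L,e_R} with total face variation ΔF = Σ_c (F_c(G') − F_c(G)) ≥ 0, and ΔF = 0 is possible only if F_{c_3}^{{e_L,e_R}}(G) = 2 for the remaining color c_3. -/
/-!  A combinatorial model of the Feynman graphs of the rank-3 tetrahedral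
(`O(N)^3`) tensor model.

A graph consists of a finite set `B` of bubbles (copies of the tetrahedron
`K_4`); each bubble has four vertices, so the vertex set is `B × Fin 4`.
Inside every bubble the edges of colors `1,2,3` are given once and for all by
the three fixed-point-free involutions of `Fin 4` (the proper 3-edge-coloring
of `K_4`).  The color-0 propagator edges, one per vertex, are encoded by a
fixed-point-free involution `pairing` of the vertex set. -/

open Equiv

/-- The color-`c` (for `c ∈ {1,2,3}`, here `c : Fin 3`) perfect matching on the
four vertices of a tetrahedral bubble. -/
def bubblePerm : Fin 3 → Equiv.Perm (Fin 4) :=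
  ![Equiv.swap 0 1 * Equiv.swap 2 3,
    Equiv.swap 0 2 * Equiv.swap 1 3,
    Equiv.swap 0 3 * Equiv.swap 1 2]

/-- A Feynman graph of the tetrahedral tensor model: a finite set of `K_4`
bubbles together with a fixed-point-free involution of the vertex set
describing the color-0 edges. -/
structure TGraph where
  B : Type
  [fintypeB : Fintype B]
  [decB : DecidableEq B]
  pairing : Equiv.Perm (B × Fin 4)
  invol : ∀ v, pairing (pairing v) = v
  fixfree : ∀ v, pairing v ≠ v

attribute [instance] TGraph.fintypeB TGraph.decB

namespace TGraph

/-- The vertex set of a graph. -/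
abbrev V (G : TGraph) : Type := G.B × Fin 4

/-- The permutation of the vertices given by the color-`c` edges inside the
bubbles. -/
def colPerm (G : TGraph) (c : Fin 3) : Equiv.Perm G.V :=
  (Equiv.refl G.B).prodCongr (bubblePerm c)

/-- The number of bubbles of a graph. -/
def b (G : TGraph) : ℕ := Fintype.card G.B

/-- The subgroup of permutations of the vertices generated by the color-0
pairing and the color-`c` matching: its orbits are exactly the faces of
color `c` (cycles alternating colors `0` and `c`). -/
def faceGroup (G : TGraph) (c : Fin 3) : Subgroup (Equiv.Perm G.V) :=
  Subgroup.closure {G.pairing, G.colPerm c}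

/-- Two vertices lie on the same face of color `c`. -/
def sameFace (G : TGraph) (c : Fin 3) (u v : G.V) : Prop :=
  u ∈ MulAction.orbit (G.faceGroup c) v

/-- The number of faces of color `c` of the graph. -/
noncomputable def numFaces (G : TGraph) (c : Fin 3) : ℕ :=
  Nat.card (MulAction.orbitRel.Quotient (G.faceGroup c) G.V)

/-- The total number of faces of the graph. -/
noncomputable def F (G : TGraph) : ℕ := ∑ c : Fin 3, G.numFaces c

/-- The length of the face of color `c` through the vertex `v` (a face of
length `n` consists of `n` color-0 edges and `n` color-`c` edges, hence `2n`
vertices). -/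
noncomputable def faceLength (G : TGraph) (c : Fin 3) (v : G.V) : ℕ :=
  Nat.card (MulAction.orbit (G.faceGroup c) v) / 2

/-- The subgroup generated by all edges of the graph. -/
def fullGroup (G : TGraph) : Subgroup (Equiv.Perm G.V) :=
  Subgroup.closure ({G.pairing} ∪ Set.range G.colPerm)

/-- A graph is connected if any vertex can be reached from any other one along
its edges. -/
def Connected (G : TGraph) : Prop :=
  ∀ u v : G.V, u ∈ MulAction.orbit G.fullGroup v

/-- One step along an edge of the graph avoiding the color-0 edges whose
endpoints belong to `S`. -/
def stepAvoiding (G : TGraph) (S : Set G.V) (u v : G.V) : Prop :=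
  (∃ c, v = G.colPerm c u) ∨ (v = G.pairing u ∧ u ∉ S ∧ v ∉ S)

/-- Reachability in the graph with the color-0 edges meeting `S` removed. -/
def reachAvoiding (G : TGraph) (S : Set G.V) : G.V → G.V → Prop :=
  Relation.ReflTransGen (G.stepAvoiding S)

/-- The pair of color-0 edges through the vertices `u` and `w` disconnects the
graph when removed.  Together with the requirement that the two edges be
distinct, this is the notion of a 2-edge-cut of color-0 edges. -/
def CutDisconnects (G : TGraph) (u w : G.V) : Prop :=
  ¬ ∀ x y : G.V, G.reachAvoiding {u, G.pairing u, w, G.pairing w} x y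

/-- Two vertices are connected by a 2-point function if they are joined by a
color-0 edge, or if their two (distinct) color-0 edges form a 2-edge-cut. -/
def TwoPoint (G : TGraph) (x y : G.V) : Prop :=
  G.pairing x = y ∨ (y ≠ x ∧ y ≠ G.pairing x ∧ G.CutDisconnects x y)

/-- The flip of the two color-0 edges `{u, pairing u}` and `{w, pairing w}`
(assumed distinct) which reconnects `u` with `w` (and `pairing u` with
`pairing w`): the pairing is conjugated by the transposition exchanging
`pairing u` and `w`.  The other flip of this pair of edges is
`G.flip u (G.pairing w)`. -/
def flip (G : TGraph) (u w : G.V) : TGraph where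
  B := G.B
  pairing := Equiv.swap (G.pairing u) w * G.pairing * Equiv.swap (G.pairing u) w
  invol := by
    intro v
    simp only [Equiv.Perm.mul_apply, Equiv.swap_apply_self, G.invol]
  fixfree := by
    intro v h
    simp only [Equiv.Perm.mul_apply] at h
    have h' : G.pairing (Equiv.swap (G.pairing u) w v) = Equiv.swap (G.pairing u) w v := by
      have := congrArg (Equiv.swap (G.pairing u) w) h
      simpa using this
    exact G.fixfree _ h'

/-- The face of color `c` through the color-0 edge `{v, pairing v}` has
length 2 (it consists of this edge, a color-`c` edge, a second color-0 edge
and a second color-`c` edge closing the cycle). -/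
def FaceLen2 (G : TGraph) (c : Fin 3) (v : G.V) : Prop :=
  G.pairing v ≠ G.colPerm c v ∧
    G.pairing (G.colPerm c (G.pairing v)) = G.colPerm c v

/-- A proper face of length 2 of color `c` through `v`: a face of length 2
whose two color-0 edges connect two distinct bubbles. -/
def ProperFace2 (G : TGraph) (c : Fin 3) (v : G.V) : Prop :=
  G.FaceLen2 c v ∧ (G.pairing v).1 ≠ v.1

/-- A graph maximizes the number of faces if it is connected and no connected
graph with the same number of bubbles has more faces. -/
def MaximizesFaces (G : TGraph) : Prop :=
  G.Connected ∧ ∀ H : TGraph, H.Connected → H.b = G.b → H.F ≤ G.F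

/-- Isomorphisms of graphs: bijections of the vertex sets commuting with the
color-0 pairing and with the colored matchings inside the bubbles. -/
structure Iso (G H : TGraph) where
  toEquiv : G.V ≃ H.V
  map_pairing : ∀ v, toEquiv (G.pairing v) = H.pairing (toEquiv v)
  map_col : ∀ c v, toEquiv (G.colPerm c v) = H.colPerm c (toEquiv v)

/-- Two graphs are isomorphic. -/
def IsIso (G H : TGraph) : Prop := Nonempty (Iso G H)

end TGraph

open TGraph

/-- The leading-order two-bubble graph `G_2`: two tetrahedral bubbles with
corresponding vertices joined by four color-0 edges, so that all six faces
have length 2. -/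
def G2 : TGraph where
  B := Fin 2
  pairing := (Equiv.swap (0 : Fin 2) 1).prodCongr (Equiv.refl (Fin 4))
  invol := by
    rintro ⟨i, k⟩
    simp [Equiv.prodCongr_apply, Equiv.swap_apply_self]
  fixfree := by
    rintro ⟨i, k⟩ h
    have hi : Equiv.swap (0 : Fin 2) 1 i = i := congrArg Prod.fst h
    fin_cases i <;> simp_all

/-- The double tadpole `G_1^{(c)}`: one tetrahedral bubble whose two color-0
edges each join two vertices already adjacent by an edge of color `c`. -/
def G1 (c : Fin 3) : TGraph where
  B := Fin 1
  pairing := (Equiv.refl (Fin 1)).prodCongr (bubblePerm c)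
  invol := by
    rintro ⟨i, k⟩
    have hk : ∀ j : Fin 4, bubblePerm c (bubblePerm c j) = j := by
      fin_cases c <;> decide
    simp [Equiv.prodCongr_apply, hk]
  fixfree := by
    rintro ⟨i, k⟩ h
    have hk : bubblePerm c k = k := congrArg Prod.snd h
    have hne : ∀ j : Fin 4, bubblePerm c j ≠ j := by
      fin_cases c <;> decide
    exact hne k hk

namespace TGraph

variable (H K : TGraph)

/-- The image of a vertex of `H` in the glued graph. -/
def inlV (x : H.V) : (H.B ⊕ K.B) × Fin 4 := (Sum.inl x.1, x.2)

/-- The image of a vertex of `K` in the glued graph. -/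
def inrV (y : K.V) : (H.B ⊕ K.B) × Fin 4 := (Sum.inr y.1, y.2)

/-- The underlying function of the pairing of the graph obtained by gluing `H`
and `K` along the color-0 edges `{p, H.pairing p}` and `{q, K.pairing q}`:
these two edges are cut and the half-edges are reglued as `p — q` and
`H.pairing p — K.pairing q`.  The new pair of edges is a 2-edge-cut of the
resulting graph when `H` and `K` are connected. -/
def glueFun (p : H.V) (q : K.V) : (H.B ⊕ K.B) × Fin 4 → (H.B ⊕ K.B) × Fin 4 :=
  fun z =>
    match z with
    | (Sum.inl u, k) =>
        if (u, k) = p then inrV H K q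
        else if (u, k) = H.pairing p then inrV H K (K.pairing q)
        else inlV H K (H.pairing (u, k))
    | (Sum.inr u, k) =>
        if (u, k) = q then inlV H K p
        else if (u, k) = K.pairing q then inlV H K (H.pairing p)
        else inrV H K (K.pairing (u, k))

theorem glueFun_inlV (p : H.V) (q : K.V) (x : H.V) :
    glueFun H K p q (inlV H K x) =
      if x = p then inrV H K q
      else if x = H.pairing p then inrV H K (K.pairing q)
      else inlV H K (H.pairing x) := by
  cases x
  rfl

theorem glueFun_inrV (p : H.V) (q : K.V) (y : K.V) :
    glueFun H K p q (inrV H K y) =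
      if y = q then inlV H K p
      else if y = K.pairing q then inlV H K (H.pairing p)
      else inrV H K (K.pairing y) := by
  cases y
  rfl

theorem inlV_injective : Function.Injective (inlV H K) := by
  rintro ⟨u, k⟩ ⟨u', k'⟩ h
  have h1 : (Sum.inl u : H.B ⊕ K.B) = Sum.inl u' := congrArg Prod.fst h
  have h2 : k = k' := congrArg Prod.snd h
  exact Prod.ext (Sum.inl_injective h1) h2

theorem inrV_injective : Function.Injective (inrV H K) := by
  rintro ⟨u, k⟩ ⟨u', k'⟩ h
  have h1 : (Sum.inr u : H.B ⊕ K.B) = Sum.inr u' := congrArg Prod.fst h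
  have h2 : k = k' := congrArg Prod.snd h
  exact Prod.ext (Sum.inr_injective h1) h2

theorem inlV_ne_inrV (x : H.V) (y : K.V) : inlV H K x ≠ inrV H K y := by
  intro h
  exact Sum.inl_ne_inr (congrArg Prod.fst h)

theorem glueFun_invol_inl (p : H.V) (q : K.V) (x : H.V) :
    glueFun H K p q (glueFun H K p q (inlV H K x)) = inlV H K x := by
  rw [glueFun_inlV]
  by_cases h1 : x = p
  · rw [if_pos h1, glueFun_inrV, if_pos rfl, h1]
  · by_cases h2 : x = H.pairing p
    · rw [if_neg h1, if_pos h2, glueFun_inrV,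
        if_neg (fun h => K.fixfree q h), if_pos rfl, h2]
    · have hne1 : H.pairing x ≠ p := by
        intro h; apply h2
        have := congrArg H.pairing h
        rw [H.invol] at this; exact this
      have hne2 : H.pairing x ≠ H.pairing p := fun h => h1 (H.pairing.injective h)
      rw [if_neg h1, if_neg h2, glueFun_inlV, if_neg hne1, if_neg hne2, H.invol]

theorem glueFun_invol_inr (p : H.V) (q : K.V) (y : K.V) :
    glueFun H K p q (glueFun H K p q (inrV H K y)) = inrV H K y := by
  rw [glueFun_inrV]
  by_cases h1 : y = q
  · rw [if_pos h1, glueFun_inlV, if_pos rfl, h1]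
  · by_cases h2 : y = K.pairing q
    · rw [if_neg h1, if_pos h2, glueFun_inlV,
        if_neg (fun h => H.fixfree p h), if_pos rfl, h2]
    · have hne1 : K.pairing y ≠ q := by
        intro h; apply h2
        have := congrArg K.pairing h
        rw [K.invol] at this; exact this
      have hne2 : K.pairing y ≠ K.pairing q := fun h => h1 (K.pairing.injective h)
      rw [if_neg h1, if_neg h2, glueFun_inrV, if_neg hne1, if_neg hne2, K.invol]

theorem glueFun_involutive (p : H.V) (q : K.V) :
    Function.Involutive (glueFun H K p q) := by
  rintro ⟨(u | u), k⟩
  · exact glueFun_invol_inl H K p q (u, k)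
  · exact glueFun_invol_inr H K p q (u, k)

theorem glueFun_fixfree (p : H.V) (q : K.V) :
    ∀ z, glueFun H K p q z ≠ z := by
  have hl : ∀ x : H.V, glueFun H K p q (inlV H K x) ≠ inlV H K x := by
    intro x h
    rw [glueFun_inlV] at h
    by_cases h1 : x = p
    · rw [if_pos h1] at h
      exact inlV_ne_inrV H K x q h.symm
    · by_cases h2 : x = H.pairing p
      · rw [if_neg h1, if_pos h2] at h
        exact inlV_ne_inrV H K x (K.pairing q) h.symm
      · rw [if_neg h1, if_neg h2] at h
        exact H.fixfree x (inlV_injective H K h)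
  have hr : ∀ y : K.V, glueFun H K p q (inrV H K y) ≠ inrV H K y := by
    intro y h
    rw [glueFun_inrV] at h
    by_cases h1 : y = q
    · rw [if_pos h1] at h
      exact inlV_ne_inrV H K p y h
    · by_cases h2 : y = K.pairing q
      · rw [if_neg h1, if_pos h2] at h
        exact inlV_ne_inrV H K (H.pairing p) y h
      · rw [if_neg h1, if_neg h2] at h
        exact K.fixfree y (inrV_injective H K h)
  rintro ⟨(u | u), k⟩
  · exact hl (u, k)
  · exact hr (u, k)

/-- Gluing two graphs along a pair of color-0 edges.  When `H` and `K` are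
connected, the two new color-0 edges form a 2-edge-cut of the glued graph, and
conversely every connected graph with a color-0 2-edge-cut arises this way
from the two closed graphs obtained by cutting the two edges and closing each
side. -/
def glue (p : H.V) (q : K.V) : TGraph where
  B := H.B ⊕ K.B
  pairing := (glueFun_involutive H K p q).toPerm
  invol := fun v => glueFun_involutive H K p q v
  fixfree := fun v => glueFun_fixfree H K p q v

/-- Insertion of a melonic dipole (the 2-point graph obtained by cutting one
color-0 edge of `G_2`) on the color-0 edge `{v, G.pairing v}` of `G`. -/
def insertDipole (G : TGraph) (v : G.V) : TGraph :=
  glue G G2 v ((0 : Fin 2), (0 : Fin 4))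

end TGraph

open TGraph

/-- Melonic graphs (up to isomorphism): `G_2` is melonic, and inserting a
melonic dipole on any color-0 edge of a melonic graph yields a melonic
graph. -/
inductive IsMelonic : TGraph → Prop
  | base {G : TGraph} (h : IsIso G G2) : IsMelonic G
  | insert {G : TGraph} (hG : IsMelonic G) (v : G.V) {H : TGraph}
      (h : IsIso H (G.insertDipole v)) : IsMelonic H

/-- Double tadpoles decorated with melonic 2-point functions (up to
isomorphism): these are exactly the graphs obtained from one of the double
tadpoles `G_1^{(c)}` by repeatedly inserting melonic dipoles on color-0 edges,
i.e. double tadpoles whose two color-0 edges are replaced by melonic 2-point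
functions. -/
inductive IsDecoratedTadpole : TGraph → Prop
  | base {G : TGraph} (c : Fin 3) (h : IsIso G (G1 c)) : IsDecoratedTadpole G
  | insert {G : TGraph} (hG : IsDecoratedTadpole G) (v : G.V) {H : TGraph}
      (h : IsIso H (G.insertDipole v)) : IsDecoratedTadpole H

set_option linter.unusedSectionVars false

namespace FlipAux

open Equiv Equiv.Perm

/-- The setoid of "same cycle" for a permutation. -/
def scSetoid {α : Type*} (σ : Perm α) : Setoid α :=
  ⟨σ.SameCycle, SameCycle.refl σ, fun h => h.symm, fun h h' => h.trans h'⟩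

/-- Number of cycles (orbits, including fixed points) of a permutation. -/
noncomputable def cyc {α : Type*} (σ : Perm α) : ℕ := Nat.card (Quotient (scSetoid σ))

variable {α : Type*} [Fintype α] [DecidableEq α]

theorem sameCycle_of_pow {σ : Perm α} {x y : α} {n : ℕ} (h : (σ ^ n) x = y) :
    σ.SameCycle x y := ⟨(n : ℤ), by rw [zpow_natCast]; exact h⟩

theorem exists_pow_of_sameCycle {σ : Perm α} {x y : α} (h : σ.SameCycle x y) :
    ∃ n : ℕ, (σ ^ n) x = y := by
  obtain ⟨i, _, hi⟩ := h.exists_pow_eq'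
  exact ⟨i, hi⟩

theorem untouched_pow {σ : Perm α} {a b x : α} (ha : ¬σ.SameCycle x a)
    (hb : ¬σ.SameCycle x b) : ∀ n : ℕ, ((Equiv.swap a b * σ) ^ n) x = (σ ^ n) x := by
  intro n
  induction n with
  | zero => simp
  | succ n ih =>
    have hna : (σ ^ (n + 1)) x ≠ a := fun h => ha (sameCycle_of_pow h)
    have hnb : (σ ^ (n + 1)) x ≠ b := fun h => hb (sameCycle_of_pow h)
    have h2 : (σ ^ (n + 1)) x = σ ((σ ^ n) x) := by
      rw [pow_succ', Perm.mul_apply]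
    have h1 : ((Equiv.swap a b * σ) ^ (n + 1)) x = Equiv.swap a b (σ ((σ ^ n) x)) := by
      rw [pow_succ', Perm.mul_apply, ih, Perm.mul_apply]
    rw [h2] at hna hnb
    rw [h1, h2]
    exact Equiv.swap_apply_of_ne_of_ne hna hnb

theorem untouched_iff {σ : Perm α} {a b x : α} (ha : ¬σ.SameCycle x a)
    (hb : ¬σ.SameCycle x b) (y : α) :
    (Equiv.swap a b * σ).SameCycle x y ↔ σ.SameCycle x y := by
  constructor
  · intro h
    obtain ⟨n, hn⟩ := exists_pow_of_sameCycle h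
    rw [untouched_pow ha hb] at hn
    exact sameCycle_of_pow hn
  · intro h
    obtain ⟨n, hn⟩ := exists_pow_of_sameCycle h
    rw [← untouched_pow ha hb] at hn
    exact sameCycle_of_pow hn

theorem merge_reach {σ : Perm α} {a b : α} (hab : ¬σ.SameCycle a b) :
    ∀ n : ℕ, (Equiv.swap a b * σ).SameCycle a ((σ ^ n) a) := by
  intro n
  induction n with
  | zero => simpa using SameCycle.refl (Equiv.swap a b * σ) a
  | succ n ih =>
    have hya : σ.SameCycle a ((σ ^ n) a) := sameCycle_of_pow rfl
    have hσyb : σ ((σ ^ n) a) ≠ b := by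
      intro h
      refine hab ?_
      rw [← h]
      exact hya.trans (sameCycle_apply_right.mpr (SameCycle.refl σ _))
    have h2 : (σ ^ (n + 1)) a = σ ((σ ^ n) a) := by
      rw [pow_succ', Perm.mul_apply]
    by_cases hσya : σ ((σ ^ n) a) = a
    · rw [h2, hσya]
    · have hs : (Equiv.swap a b * σ) ((σ ^ n) a) = σ ((σ ^ n) a) := by
        rw [Perm.mul_apply]; exact Equiv.swap_apply_of_ne_of_ne hσya hσyb
      have hstep : (Equiv.swap a b * σ).SameCycle ((σ ^ n) a) (σ ((σ ^ n) a)) := by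
        rw [← hs]; exact sameCycle_apply_right.mpr (SameCycle.refl _ _)
      rw [h2]
      exact ih.trans hstep

theorem pow_orderOf_sub_one (σ : Perm α) : (σ ^ (orderOf σ - 1)) = σ⁻¹ := by
  have h1 : 0 < orderOf σ := orderOf_pos σ
  have h : σ ^ (orderOf σ - 1) * σ = 1 := by
    rw [← pow_succ, Nat.sub_add_cancel h1, pow_orderOf_eq_one]
  exact mul_eq_one_iff_eq_inv.mp h

theorem merge_connect {σ : Perm α} {a b : α} (hab : ¬σ.SameCycle a b) :
    (Equiv.swap a b * σ).SameCycle a b := by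
  have h1 : (Equiv.swap a b * σ).SameCycle a ((σ ^ (orderOf σ - 1)) a) :=
    merge_reach hab _
  have h2 : (σ ^ (orderOf σ - 1)) a = σ⁻¹ a := by rw [pow_orderOf_sub_one]
  have h3 : (Equiv.swap a b * σ) (σ⁻¹ a) = b := by
    rw [Perm.mul_apply, (show ∀ x, σ (σ⁻¹ x) = x from fun x => σ.apply_symm_apply x),
      Equiv.swap_apply_left]
  rw [h2] at h1
  have h4 : (Equiv.swap a b * σ).SameCycle (σ⁻¹ a) ((Equiv.swap a b * σ) (σ⁻¹ a)) :=
    sameCycle_apply_right.mpr (SameCycle.refl _ _)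
  rw [h3] at h4
  exact h1.trans h4

theorem merge_reach' {σ : Perm α} {a b : α} (hab : ¬σ.SameCycle a b) :
    ∀ n : ℕ, (Equiv.swap a b * σ).SameCycle b ((σ ^ n) b) := by
  intro n
  have hba : ¬σ.SameCycle b a := fun h => hab h.symm
  rw [Equiv.swap_comm]
  exact merge_reach hba n

theorem merge_mono {σ : Perm α} {a b x y : α} (hab : ¬σ.SameCycle a b)
    (h : σ.SameCycle x y) : (Equiv.swap a b * σ).SameCycle x y := by
  by_cases hxa : σ.SameCycle x a
  · have hya : σ.SameCycle y a := (h.symm).trans hxa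
    obtain ⟨n, hn⟩ := exists_pow_of_sameCycle hxa.symm
    obtain ⟨k, hk⟩ := exists_pow_of_sameCycle hya.symm
    have h1 : (Equiv.swap a b * σ).SameCycle a x := by rw [← hn]; exact merge_reach hab n
    have h2 : (Equiv.swap a b * σ).SameCycle a y := by rw [← hk]; exact merge_reach hab k
    exact h1.symm.trans h2
  · by_cases hxb : σ.SameCycle x b
    · have hyb : σ.SameCycle y b := (h.symm).trans hxb
      obtain ⟨n, hn⟩ := exists_pow_of_sameCycle hxb.symm
      obtain ⟨k, hk⟩ := exists_pow_of_sameCycle hyb.symm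
      have h1 : (Equiv.swap a b * σ).SameCycle b x := by rw [← hn]; exact merge_reach' hab n
      have h2 : (Equiv.swap a b * σ).SameCycle b y := by rw [← hk]; exact merge_reach' hab k
      exact h1.symm.trans h2
    · exact (untouched_iff hxa hxb y).mpr h

theorem split_disconnect {σ : Perm α} {a b : α} (hne : a ≠ b) (hab : σ.SameCycle a b) :
    ¬(Equiv.swap a b * σ).SameCycle a b := by
  obtain ⟨i, hi⟩ := exists_pow_of_sameCycle hab
  have hipos : 0 < i := by
    rcases Nat.eq_zero_or_pos i with h | h
    · exfalso; apply hne; rw [h, pow_zero] at hi; simpa using hi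
    · exact h
  -- least positive power reaching b
  have hex : ∃ n, 0 < n ∧ (σ ^ n) a = b := ⟨i, hipos, hi⟩
  classical
  set t := Nat.find hex with ht
  obtain ⟨htpos, htb⟩ : 0 < t ∧ (σ ^ t) a = b := Nat.find_spec hex
  have hmin : ∀ j, 0 < j → j < t → (σ ^ j) a ≠ b := by
    intro j hj hjt hb
    exact Nat.find_min hex hjt ⟨hj, hb⟩
  have key : ∀ k : ℕ, ∃ j, j < t ∧ ((Equiv.swap a b * σ) ^ k) a = (σ ^ j) a := by
    intro k
    induction k with
    | zero => exact ⟨0, htpos, by simp⟩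
    | succ k ih =>
      obtain ⟨j, hjt, hk⟩ := ih
      have hstep : ((Equiv.swap a b * σ) ^ (k + 1)) a
          = Equiv.swap a b (σ ((σ ^ j) a)) := by
        rw [pow_succ', Perm.mul_apply, hk, Perm.mul_apply]
      have hσj : σ ((σ ^ j) a) = (σ ^ (j + 1)) a := by rw [pow_succ', Perm.mul_apply]
      have hja : (σ ^ (j + 1)) a ≠ a := by
        intro hja
        rcases Nat.lt_or_ge (j + 1) t with hlt | hge
        · have : (σ ^ (t - (j + 1))) a = b := by
            have : (σ ^ (t - (j + 1))) ((σ ^ (j + 1)) a) = (σ ^ t) a := by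
              rw [← Perm.mul_apply, ← pow_add, Nat.sub_add_cancel hlt.le]
            rw [hja] at this
            rw [this, htb]
          rcases Nat.eq_zero_or_pos (t - (j + 1)) with h0 | h0
          · rw [h0, pow_zero] at this
            exact hne (by simpa using this)
          · exact hmin _ h0 (by omega) this
        · have hjt1 : j + 1 = t := by omega
          rw [hjt1, htb] at hja
          exact hne hja.symm
      by_cases hjb : (σ ^ (j + 1)) a = b
      · refine ⟨0, htpos, ?_⟩
        rw [hstep, hσj, hjb, Equiv.swap_apply_right, pow_zero]
        rfl
      · have hjlt : j + 1 < t := by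
          rcases Nat.lt_or_ge (j + 1) t with h | h
          · exact h
          · exfalso
            have : j + 1 = t := by omega
            rw [this, htb] at hjb
            exact hjb rfl
        refine ⟨j + 1, hjlt, ?_⟩
        rw [hstep, hσj, Equiv.swap_apply_of_ne_of_ne hja hjb]
  intro hcon
  obtain ⟨k, hk⟩ := exists_pow_of_sameCycle hcon
  obtain ⟨j, hjt, hj⟩ := key k
  rw [hk] at hj
  rcases Nat.eq_zero_or_pos j with h0 | h0
  · rw [h0, pow_zero] at hj
    exact hne (by simpa using hj.symm)
  · exact hmin j h0 hjt hj.symm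

theorem sc_mk_eq {σ : Perm α} {x y : α} :
    (Quotient.mk'' x : Quotient (scSetoid σ)) = Quotient.mk'' y ↔ σ.SameCycle x y :=
  ⟨fun h => Quotient.exact' h, fun h => Quotient.sound' h⟩

theorem nat_card_eq_sum_fibers {β γ : Type*} [Fintype β] [Fintype γ] [DecidableEq γ]
    (g : β → γ) : Nat.card β = ∑ q : γ, ({x : β | g x = q} : Set β).ncard := by
  classical
  rw [Nat.card_eq_fintype_card, ← Fintype.card_congr (Equiv.sigmaFiberEquiv g),
    Fintype.card_sigma]
  refine Finset.sum_congr rfl fun q _ => ?_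
  rw [← Nat.card_coe_set_eq, Nat.card_eq_fintype_card]
  exact Fintype.card_congr (Equiv.refl _)

theorem cyc_merge {σ : Perm α} {a b : α} (hne : a ≠ b) (hab : ¬σ.SameCycle a b) :
    cyc σ = cyc (Equiv.swap a b * σ) + 1 := by
  classical
  set τ := Equiv.swap a b * σ with hτ
  have hba : (τ).SameCycle b a := (merge_connect hab).symm
  let g : Quotient (scSetoid σ) → Quotient (scSetoid τ) :=
    Quotient.map' id (fun x y h => merge_mono hab h)
  have hg : ∀ x : α, g (Quotient.mk'' x) = Quotient.mk'' x := fun x => rfl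
  letI : Fintype (Quotient (scSetoid σ)) := Fintype.ofFinite _
  letI : Fintype (Quotient (scSetoid τ)) := Fintype.ofFinite _
  have hsum := nat_card_eq_sum_fibers g
  have hfib : ∀ q : Quotient (scSetoid τ),
      ({z : Quotient (scSetoid σ) | g z = q} : Set _).ncard
        = 1 + (if q = Quotient.mk'' a then 1 else 0) := by
    intro q
    induction q using Quotient.inductionOn' with
    | h z =>
      by_cases hz : τ.SameCycle z a
      · have hq : (Quotient.mk'' z : Quotient (scSetoid τ)) = Quotient.mk'' a :=
          sc_mk_eq.mpr hz
        rw [if_pos hq]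
        have hset : ({zq : Quotient (scSetoid σ) | g zq = Quotient.mk'' z} : Set _)
            = {Quotient.mk'' a, Quotient.mk'' b} := by
          ext zq
          induction zq using Quotient.inductionOn' with
          | h x =>
            simp only [Set.mem_setOf_eq, hg, Set.mem_insert_iff, Set.mem_singleton_iff]
            rw [sc_mk_eq, sc_mk_eq, sc_mk_eq]
            constructor
            · intro hxz
              have hxa : τ.SameCycle x a := hxz.trans hz
              by_cases h1 : σ.SameCycle x a
              · exact Or.inl h1
              · by_cases h2 : σ.SameCycle x b
                · exact Or.inr h2
                · exact absurd ((untouched_iff h1 h2 a).mp hxa) h1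
            · rintro (h1 | h1)
              · exact (merge_mono hab h1).trans hz.symm
              · exact ((merge_mono hab h1).trans hba).trans hz.symm
        rw [hset, Set.ncard_pair]
        intro h
        exact hab (sc_mk_eq.mp h)
      · have hq : (Quotient.mk'' z : Quotient (scSetoid τ)) ≠ Quotient.mk'' a := by
          intro h
          exact hz (sc_mk_eq.mp h)
        rw [if_neg hq]
        have hza : ¬σ.SameCycle z a := fun h => hz (merge_mono hab h)
        have hzb : ¬σ.SameCycle z b := fun h => hz ((merge_mono hab h).trans hba)
        have hset : ({zq : Quotient (scSetoid σ) | g zq = Quotient.mk'' z} : Set _)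
            = {Quotient.mk'' z} := by
          ext zq
          induction zq using Quotient.inductionOn' with
          | h x =>
            simp only [Set.mem_setOf_eq, hg, Set.mem_singleton_iff]
            rw [sc_mk_eq, sc_mk_eq]
            constructor
            · intro hxz
              exact ((untouched_iff hza hzb x).mp hxz.symm).symm
            · intro hxz
              exact ((untouched_iff hza hzb x).mpr hxz.symm).symm
        rw [hset, Set.ncard_singleton]
  have hQ : Nat.card (Quotient (scSetoid σ)) = Nat.card (Quotient (scSetoid τ)) + 1 := by
    rw [hsum, Finset.sum_congr rfl (fun q _ => hfib q), Finset.sum_add_distrib]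
    rw [Finset.sum_ite_eq' Finset.univ (Quotient.mk'' a : Quotient (scSetoid τ)) (fun _ => 1)]
    simp [Nat.card_eq_fintype_card]
  exact hQ

theorem cyc_split {σ : Perm α} {a b : α} (hne : a ≠ b) (hab : σ.SameCycle a b) :
    cyc (Equiv.swap a b * σ) = cyc σ + 1 := by
  have h1 : ¬(Equiv.swap a b * σ).SameCycle a b := split_disconnect hne hab
  have h2 := cyc_merge hne h1
  rwa [← mul_assoc, Equiv.swap_mul_self, one_mul] at h2

section Faces

variable {p m : Perm α}

theorem invol_inv (hp2 : ∀ x, p (p x) = x) : p⁻¹ = p := by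
  have h : p * p = 1 := Equiv.ext fun x => hp2 x
  exact inv_eq_of_mul_eq_one_left h

theorem sigma_p_apply (x : α) : (m * p) (p x) = m (p (p x)) := rfl

theorem m_eq_sigma_p (hp2 : ∀ x, p (p x) = x) (x : α) : m x = (m * p) (p x) := by
  rw [Perm.mul_apply, hp2]

theorem conj_sigma (hp2 : ∀ x, p (p x) = x) (hm2 : ∀ x, m (m x) = x) :
    p * (m * p) * p⁻¹ = (m * p)⁻¹ := by
  have hp : p⁻¹ = p := invol_inv hp2
  have hm : m⁻¹ = m := invol_inv hm2
  rw [mul_inv_rev, hp, hm]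
  ext x
  simp only [Perm.mul_apply, hp2]

theorem sc_conj_p (hp2 : ∀ x, p (p x) = x) (hm2 : ∀ x, m (m x) = x) (x y : α) :
    (m * p).SameCycle (p x) (p y) ↔ (m * p).SameCycle x y := by
  have h := (sameCycle_conj (g := p) (f := m * p) (x := p x) (y := p y))
  rw [conj_sigma hp2 hm2, invol_inv hp2, hp2, hp2, sameCycle_inv] at h
  exact h

theorem p_zpow (hp2 : ∀ x, p (p x) = x) (hm2 : ∀ x, m (m x) = x) (j : ℤ) (y : α) :
    p (((m * p) ^ j) y) = ((m * p) ^ (-j)) (p y) := by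
  have h1 : (p * (m * p) * p⁻¹) ^ j = p * (m * p) ^ j * p⁻¹ := conj_zpow
  rw [conj_sigma hp2 hm2] at h1
  have h2 : ((m * p) ^ (-j)) = p * (m * p) ^ j * p⁻¹ := by
    rw [← h1, zpow_neg, inv_zpow]
  rw [h2]
  simp only [Perm.mul_apply, invol_inv hp2, hp2]

theorem not_sc_pairing (hp2 : ∀ x, p (p x) = x) (hm2 : ∀ x, m (m x) = x)
    (hpf : ∀ x, p x ≠ x) (hmf : ∀ x, m x ≠ x) (x : α) :
    ¬(m * p).SameCycle x (p x) := by
  rintro ⟨k, hk⟩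
  set σ := m * p with hσ
  have hP : ∀ j : ℤ, p ((σ ^ j) x) = (σ ^ (k - j)) x := by
    intro j
    rw [p_zpow hp2 hm2 j x, ← hk, ← Perm.mul_apply, ← zpow_add,
      show -j + k = k - j by ring]
  rcases Int.even_or_odd k with ⟨j, hj⟩ | ⟨j, hj⟩
  · have := hP j
    rw [hj] at this
    have h2 : j + j - j = j := by ring
    rw [h2] at this
    exact hpf _ this
  · have := hP (j + 1)
    have h2 : k - (j + 1) = j := by omega
    rw [h2] at this
    have hm' : m ((σ ^ (j + 1)) x) = σ (p ((σ ^ (j + 1)) x)) := by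
      rw [m_eq_sigma_p hp2 ((σ ^ (j + 1)) x)]
    rw [this] at hm'
    have h3 : σ ((σ ^ j) x) = (σ ^ (j + 1)) x := by
      rw [← Perm.mul_apply, ← zpow_one_add, show (1 + j : ℤ) = j + 1 by ring]
    rw [h3] at hm'
    exact hmf _ hm'

theorem sc_m_m (hp2 : ∀ x, p (p x) = x) (x y : α) :
    (m * p).SameCycle (m x) (m y) ↔ (m * p).SameCycle (p x) (p y) := by
  rw [m_eq_sigma_p hp2 x, m_eq_sigma_p hp2 y, sameCycle_apply_left, sameCycle_apply_right]

theorem sc_p_swap (hp2 : ∀ x, p (p x) = x) (hm2 : ∀ x, m (m x) = x) (x y : α) :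
    (m * p).SameCycle (p x) y ↔ (m * p).SameCycle x (p y) := by
  have h := sc_conj_p hp2 hm2 x (p y)
  rw [hp2] at h
  exact h

theorem face_orbit (hp2 : ∀ x, p (p x) = x) (hm2 : ∀ x, m (m x) = x) (v x : α) :
    x ∈ MulAction.orbit (Subgroup.closure {p, m} : Subgroup (Perm α)) v ↔
      (m * p).SameCycle v x ∨ (m * p).SameCycle (p v) x := by
  set σ := m * p with hσ
  have hpmem : p ∈ Subgroup.closure ({p, m} : Set (Perm α)) :=
    Subgroup.subset_closure (Set.mem_insert _ _)
  have hmmem : m ∈ Subgroup.closure ({p, m} : Set (Perm α)) :=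
    Subgroup.subset_closure (Set.mem_insert_of_mem _ rfl)
  have hσmem : σ ∈ Subgroup.closure ({p, m} : Set (Perm α)) := mul_mem hmmem hpmem
  constructor
  · rintro ⟨⟨g, hg⟩, rfl⟩
    have key : ∀ y : α, (σ.SameCycle v y ∨ σ.SameCycle (p v) y) ↔
        (σ.SameCycle v (g y) ∨ σ.SameCycle (p v) (g y)) := by
      have hstepp : ∀ y : α, (σ.SameCycle v y ∨ σ.SameCycle (p v) y) →
          (σ.SameCycle v (p y) ∨ σ.SameCycle (p v) (p y)) := by
        rintro y (h | h)
        · right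
          have := (sc_conj_p hp2 hm2 v y).mpr h
          exact this
        · left
          have := (sc_conj_p hp2 hm2 (p v) y).mpr h
          rwa [hp2] at this
      have hstepm : ∀ y : α, (σ.SameCycle v y ∨ σ.SameCycle (p v) y) →
          (σ.SameCycle v (m y) ∨ σ.SameCycle (p v) (m y)) := by
        intro y hy
        have h1 := hstepp y hy
        have h2 : m y = σ (p y) := m_eq_sigma_p hp2 y
        rw [h2]
        rcases h1 with h | h
        · exact Or.inl (sameCycle_apply_right.mpr h)
        · exact Or.inr (sameCycle_apply_right.mpr h)
      induction hg using Subgroup.closure_induction with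
      | mem x hx =>
        rcases hx with rfl | hx
        · intro y
          constructor
          · exact hstepp y
          · intro h
            have := hstepp _ h
            rwa [hp2] at this
        · rcases hx with rfl
          intro y
          constructor
          · exact hstepm y
          · intro h
            have := hstepm _ h
            rwa [hm2] at this
      | one => intro y; simp
      | mul a b ha hb iha ihb =>
        intro y
        rw [ihb y, iha (b y)]
        rfl
      | inv a ha iha =>
        intro y
        have := iha (a⁻¹ y)
        rw [(show ∀ x, a (a⁻¹ x) = x from fun x => a.apply_symm_apply x)] at this
        rw [this]
    have hv : σ.SameCycle v v ∨ σ.SameCycle (p v) v := Or.inl (SameCycle.refl _ _)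
    have := (key v).mp hv
    simpa using this
  · rintro (⟨k, hk⟩ | ⟨k, hk⟩)
    · refine ⟨⟨σ ^ k, zpow_mem hσmem k⟩, ?_⟩
      exact hk
    · refine ⟨⟨σ ^ k * p, mul_mem (zpow_mem hσmem k) hpmem⟩, ?_⟩
      exact hk

theorem orb_mk_eq {H : Subgroup (Perm α)} {x y : α} :
    (Quotient.mk'' x : MulAction.orbitRel.Quotient H α) = Quotient.mk'' y ↔
      x ∈ MulAction.orbit H y :=
  ⟨fun h => Quotient.exact' h, fun h => Quotient.sound' h⟩

theorem cyc_eq_two_mul (hp2 : ∀ x, p (p x) = x) (hm2 : ∀ x, m (m x) = x)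
    (hpf : ∀ x, p x ≠ x) (hmf : ∀ x, m x ≠ x) :
    cyc (m * p) =
      2 * Nat.card (MulAction.orbitRel.Quotient
        (Subgroup.closure {p, m} : Subgroup (Perm α)) α) := by
  classical
  set σ := m * p with hσ
  set H : Subgroup (Perm α) := Subgroup.closure {p, m} with hH
  let ψ : Quotient (scSetoid σ) → MulAction.orbitRel.Quotient H α :=
    Quotient.map' id (fun x y h => (face_orbit hp2 hm2 y x).mpr (Or.inl h.symm))
  have hψ : ∀ x : α, ψ (Quotient.mk'' x) = Quotient.mk'' x := fun x => rfl
  letI : Fintype (Quotient (scSetoid σ)) := Fintype.ofFinite _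
  letI : Fintype (MulAction.orbitRel.Quotient H α) := Fintype.ofFinite _
  have hsum := nat_card_eq_sum_fibers ψ
  have hfib : ∀ q : MulAction.orbitRel.Quotient H α,
      ({z : Quotient (scSetoid σ) | ψ z = q} : Set _).ncard = 2 := by
    intro q
    induction q using Quotient.inductionOn' with
    | h v =>
      have hset : ({z : Quotient (scSetoid σ) | ψ z = Quotient.mk'' v} : Set _)
          = {Quotient.mk'' v, Quotient.mk'' (p v)} := by
        ext z
        induction z using Quotient.inductionOn' with
        | h x =>
          simp only [Set.mem_setOf_eq, hψ, Set.mem_insert_iff, Set.mem_singleton_iff]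
          rw [orb_mk_eq, face_orbit hp2 hm2, sc_mk_eq, sc_mk_eq]
          constructor
          · rintro (h | h)
            · exact Or.inl h.symm
            · exact Or.inr h.symm
          · rintro (h | h)
            · exact Or.inl h.symm
            · exact Or.inr h.symm
      rw [hset, Set.ncard_pair]
      intro h
      exact not_sc_pairing hp2 hm2 hpf hmf v (sc_mk_eq.mp h)
  have hQ : Nat.card (Quotient (scSetoid σ)) =
      2 * Nat.card (MulAction.orbitRel.Quotient H α) := by
    rw [hsum, Finset.sum_congr rfl (fun q _ => hfib q), Finset.sum_const, smul_eq_mul,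
      Nat.card_eq_fintype_card, Finset.card_univ, mul_comm]
  exact hQ

end Faces

end FlipAux
namespace FlipProof

open Equiv Equiv.Perm TGraph FlipAux

theorem bubblePerm_invol : ∀ c : Fin 3, ∀ j : Fin 4, bubblePerm c (bubblePerm c j) = j := by
  decide

theorem bubblePerm_fixfree : ∀ c : Fin 3, ∀ j : Fin 4, bubblePerm c j ≠ j := by
  decide

theorem colPerm_invol (G : TGraph) (c : Fin 3) : ∀ v : G.V, G.colPerm c (G.colPerm c v) = v := by
  rintro ⟨i, k⟩
  simp [TGraph.colPerm, bubblePerm_invol]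

theorem colPerm_fixfree (G : TGraph) (c : Fin 3) : ∀ v : G.V, G.colPerm c v ≠ v := by
  rintro ⟨i, k⟩ h
  exact bubblePerm_fixfree c k (congrArg Prod.snd h)

theorem two_mul_numFaces (G : TGraph) (c : Fin 3) :
    cyc (G.colPerm c * G.pairing) = 2 * G.numFaces c :=
  cyc_eq_two_mul G.invol (colPerm_invol G c) G.fixfree (colPerm_fixfree G c)

theorem two_mul_numFaces_flipA (G : TGraph) (u w : G.V) (c : Fin 3) :
    cyc (α := G.V) (((G.flip u w).colPerm c * (G.flip u w).pairing : Equiv.Perm G.V))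
      = 2 * (G.flip u w).numFaces c :=
  two_mul_numFaces (G.flip u w) c

theorem sameFace_iff (G : TGraph) (c : Fin 3) (u w : G.V) :
    G.sameFace c u w ↔ (G.colPerm c * G.pairing).SameCycle u w ∨
      (G.colPerm c * G.pairing).SameCycle u (G.pairing w) := by
  have h := face_orbit (p := G.pairing) (m := G.colPerm c) G.invol (colPerm_invol G c) w u
  constructor
  · intro hs
    rcases h.mp hs with h1 | h1
    · exact Or.inl h1.symm
    · exact Or.inr h1.symm
  · rintro (h1 | h1)
    · exact h.mpr (Or.inl h1.symm)
    · exact h.mpr (Or.inr h1.symm)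

theorem swap_comm_disjoint {α : Type*} [DecidableEq α] {a b c d : α}
    (hac : a ≠ c) (had : a ≠ d) (hbc : b ≠ c) (hbd : b ≠ d) :
    Equiv.swap a b * Equiv.swap c d = Equiv.swap c d * Equiv.swap a b := by
  have hd : Equiv.Perm.Disjoint (Equiv.swap a b) (Equiv.swap c d) := by
    intro x
    by_cases hxa : x = a
    · subst hxa; right; exact Equiv.swap_apply_of_ne_of_ne hac had
    · by_cases hxb : x = b
      · subst hxb; right; exact Equiv.swap_apply_of_ne_of_ne hbc hbd
      · left; exact Equiv.swap_apply_of_ne_of_ne hxa hxb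
  exact hd.commute.eq

section FlipDelta

variable (G : TGraph) (u w : G.V)

theorem flip_pairing_def : (G.flip u w).pairing
    = Equiv.swap (G.pairing u) w * G.pairing * Equiv.swap (G.pairing u) w := rfl

theorem flip_colPerm (c : Fin 3) : (G.flip u w).colPerm c = G.colPerm c := rfl

theorem flip_sigma_A (hw1 : w ≠ u) (hw2 : w ≠ G.pairing u) (c : Fin 3) :
    ((G.flip u w).colPerm c * (G.flip u w).pairing : Equiv.Perm G.V) =
      Equiv.swap (G.colPerm c u) (G.colPerm c (G.pairing w)) *
        (Equiv.swap (G.colPerm c w) (G.colPerm c (G.pairing u)) *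
          (G.colPerm c * G.pairing)) := by
  show G.colPerm c * (Equiv.swap (G.pairing u) w * G.pairing * Equiv.swap (G.pairing u) w) = _
  set p := G.pairing with hp
  set m := G.colPerm c with hm
  have hupu : u ≠ p u := fun h => G.fixfree u h.symm
  have hupw : u ≠ p w := by
    intro h
    apply hw2
    rw [h, G.invol]
  have hwpw : w ≠ p w := fun h => G.fixfree w h.symm
  have hpupw : p u ≠ p w := fun h => hw1 (G.pairing.injective h).symm
  have hsw : Equiv.swap u (p w) = p * Equiv.swap (p u) w * p⁻¹ := by
    have h := Equiv.swap_apply_apply p (p u) w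
    rw [G.invol] at h
    exact h
  have hcomm : Equiv.swap (p u) w * Equiv.swap u (p w)
      = Equiv.swap u (p w) * Equiv.swap (p u) w :=
    swap_comm_disjoint (Ne.symm hupu) hpupw hw1 hwpw
  have h1 : Equiv.swap (p u) w * p * Equiv.swap (p u) w
      = Equiv.swap u (p w) * (Equiv.swap (p u) w * p) := by
    calc Equiv.swap (p u) w * p * Equiv.swap (p u) w
        = Equiv.swap (p u) w * (p * Equiv.swap (p u) w * p⁻¹) * p := by group
      _ = Equiv.swap (p u) w * Equiv.swap u (p w) * p := by rw [← hsw]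
      _ = Equiv.swap u (p w) * (Equiv.swap (p u) w * p) := by rw [hcomm, mul_assoc]
  rw [h1, Equiv.swap_apply_apply m u (p w), Equiv.swap_apply_apply m w (p u),
    Equiv.swap_comm w (p u)]
  group

theorem flip_sigma_B (hw1 : w ≠ u) (hw2 : w ≠ G.pairing u) (c : Fin 3) :
    ((G.flip u (G.pairing w)).colPerm c * (G.flip u (G.pairing w)).pairing : Equiv.Perm G.V) =
      Equiv.swap (G.colPerm c u) (G.colPerm c w) *
        (Equiv.swap (G.colPerm c (G.pairing u)) (G.colPerm c (G.pairing w)) *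
          (G.colPerm c * G.pairing)) := by
  show G.colPerm c *
      (Equiv.swap (G.pairing u) (G.pairing w) * G.pairing *
        Equiv.swap (G.pairing u) (G.pairing w)) = _
  set p := G.pairing with hp
  set m := G.colPerm c with hm
  have hupu : u ≠ p u := fun h => G.fixfree u h.symm
  have hupw : u ≠ p w := by
    intro h
    apply hw2
    rw [h, G.invol]
  have hwpw : w ≠ p w := fun h => G.fixfree w h.symm
  have hpupw : p u ≠ p w := fun h => hw1 (G.pairing.injective h).symm
  have hsw : Equiv.swap u w = p * Equiv.swap (p u) (p w) * p⁻¹ := by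
    have h := Equiv.swap_apply_apply p (p u) (p w)
    rw [G.invol, G.invol] at h
    exact h
  have hcomm : Equiv.swap (p u) (p w) * Equiv.swap u w
      = Equiv.swap u w * Equiv.swap (p u) (p w) :=
    swap_comm_disjoint (Ne.symm hupu) (Ne.symm hw2) (fun h => hupw h.symm)
      (fun h => hwpw h.symm)
  have h1 : Equiv.swap (p u) (p w) * p * Equiv.swap (p u) (p w)
      = Equiv.swap u w * (Equiv.swap (p u) (p w) * p) := by
    calc Equiv.swap (p u) (p w) * p * Equiv.swap (p u) (p w)
        = Equiv.swap (p u) (p w) * (p * Equiv.swap (p u) (p w) * p⁻¹) * p := by group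
      _ = Equiv.swap (p u) (p w) * Equiv.swap u w * p := by rw [← hsw]
      _ = Equiv.swap u w * (Equiv.swap (p u) (p w) * p) := by rw [hcomm, mul_assoc]
  rw [h1, Equiv.swap_apply_apply m u w, Equiv.swap_apply_apply m (p u) (p w)]
  group

end FlipDelta

end FlipProof
namespace FlipProof
open Equiv Equiv.Perm TGraph FlipAux

section Delta

variable (G : TGraph) (u w : G.V)

theorem two_mul_numFaces_flipB (c : Fin 3) :
    cyc (α := G.V) (((G.flip u (G.pairing w)).colPerm c * (G.flip u (G.pairing w)).pairing :
      Equiv.Perm G.V)) = 2 * (G.flip u (G.pairing w)).numFaces c :=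
  two_mul_numFaces (G.flip u (G.pairing w)) c

variable (c : Fin 3)

theorem delta_case_w (hw1 : w ≠ u) (hw2 : w ≠ G.pairing u) (h : (G.colPerm c * G.pairing).SameCycle u w) :
    (G.flip u w).numFaces c = G.numFaces c ∧
      (G.flip u (G.pairing w)).numFaces c = G.numFaces c + 1 := by
  have hp2 := G.invol
  have hm2 := colPerm_invol G c
  have hupw : u ≠ G.pairing w := fun hh => hw2 (by rw [hh, G.invol])
  have hpupw : G.pairing u ≠ G.pairing w := fun hh => hw1 (G.pairing.injective hh).symm
  have hA2 := not_sc_pairing (p := G.pairing) (m := G.colPerm c) hp2 hm2 G.fixfree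
    (colPerm_fixfree G c)
  have hconj := sc_conj_p (p := G.pairing) (m := G.colPerm c) hp2 hm2
  have hmm := sc_m_m (p := G.pairing) (m := G.colPerm c) hp2
  have hpsw := sc_p_swap (p := G.pairing) (m := G.colPerm c) hp2 hm2
  have ne1 : G.colPerm c w ≠ G.colPerm c (G.pairing u) :=
    fun hh => hw2 ((G.colPerm c).injective hh)
  have ne2 : G.colPerm c u ≠ G.colPerm c (G.pairing w) :=
    fun hh => hupw ((G.colPerm c).injective hh)
  have ne3 : G.colPerm c (G.pairing u) ≠ G.colPerm c (G.pairing w) :=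
    fun hh => hpupw ((G.colPerm c).injective hh)
  have ne4 : G.colPerm c u ≠ G.colPerm c w := fun hh => hw1 ((G.colPerm c).injective hh).symm
  -- translation facts
  have T1 : (G.colPerm c * G.pairing).SameCycle (G.colPerm c u) (G.colPerm c w) ↔
      (G.colPerm c * G.pairing).SameCycle u w := (hmm u w).trans (hconj u w)
  have T2 : (G.colPerm c * G.pairing).SameCycle (G.colPerm c u)
      (G.colPerm c (G.pairing w)) ↔ (G.colPerm c * G.pairing).SameCycle u (G.pairing w) := by
    have e := hmm u (G.pairing w)
    rw [hp2 w] at e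
    exact e.trans (hpsw u w)
  have T3 : (G.colPerm c * G.pairing).SameCycle (G.colPerm c u)
      (G.colPerm c (G.pairing u)) ↔ (G.colPerm c * G.pairing).SameCycle u (G.pairing u) := by
    have e := hmm u (G.pairing u)
    rw [hp2 u] at e
    exact e.trans sameCycle_comm
  have T4 : (G.colPerm c * G.pairing).SameCycle (G.colPerm c (G.pairing u))
      (G.colPerm c (G.pairing w)) ↔ (G.colPerm c * G.pairing).SameCycle u w := by
    have e := hmm (G.pairing u) (G.pairing w)
    rw [hp2 u, hp2 w] at e
    exact e
  have T5 : (G.colPerm c * G.pairing).SameCycle (G.colPerm c w)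
      (G.colPerm c (G.pairing u)) ↔ (G.colPerm c * G.pairing).SameCycle u (G.pairing w) := by
    have e := hmm w (G.pairing u)
    rw [hp2 u] at e
    exact e.trans sameCycle_comm
  -- the two flips
  have hnupw : ¬(G.colPerm c * G.pairing).SameCycle u (G.pairing w) :=
    fun hx => hA2 w (h.symm.trans hx)
  have f1 : ¬(G.colPerm c * G.pairing).SameCycle (G.colPerm c w) (G.colPerm c (G.pairing u)) :=
    fun hx => hnupw (T5.mp hx)
  have e1 := cyc_merge ne1 f1
  have c1 : (G.colPerm c * G.pairing).SameCycle (G.colPerm c u) (G.colPerm c w) := T1.mpr h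
  have c2 : (G.colPerm c * G.pairing).SameCycle (G.colPerm c (G.pairing u))
      (G.colPerm c (G.pairing w)) := T4.mpr h
  have g1 : (Equiv.swap (G.colPerm c w) (G.colPerm c (G.pairing u)) *
      (G.colPerm c * G.pairing)).SameCycle (G.colPerm c u) (G.colPerm c (G.pairing w)) :=
    ((merge_mono f1 c1).trans (merge_connect f1)).trans (merge_mono f1 c2)
  have e2 := cyc_split ne2 g1
  have hnf := two_mul_numFaces G c
  have hnfA := two_mul_numFaces_flipA G u w c
  rw [flip_sigma_A G u w hw1 hw2 c] at hnfA
  -- flip B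
  have e3 := cyc_split ne3 c2
  have nx1 : ¬(G.colPerm c * G.pairing).SameCycle (G.colPerm c u)
      (G.colPerm c (G.pairing u)) := fun hx => hA2 u (T3.mp hx)
  have nx2 : ¬(G.colPerm c * G.pairing).SameCycle (G.colPerm c u)
      (G.colPerm c (G.pairing w)) := fun hx => hnupw (T2.mp hx)
  have g2 : (Equiv.swap (G.colPerm c (G.pairing u)) (G.colPerm c (G.pairing w)) *
      (G.colPerm c * G.pairing)).SameCycle (G.colPerm c u) (G.colPerm c w) :=
    (untouched_iff nx1 nx2 (G.colPerm c w)).mpr c1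
  have e4 := cyc_split ne4 g2
  have hnfB := two_mul_numFaces_flipB G u w c
  rw [flip_sigma_B G u w hw1 hw2 c] at hnfB
  omega

theorem delta_case_pw (hw1 : w ≠ u) (hw2 : w ≠ G.pairing u) (h : (G.colPerm c * G.pairing).SameCycle u (G.pairing w)) :
    (G.flip u w).numFaces c = G.numFaces c + 1 ∧
      (G.flip u (G.pairing w)).numFaces c = G.numFaces c := by
  have hp2 := G.invol
  have hm2 := colPerm_invol G c
  have hupw : u ≠ G.pairing w := fun hh => hw2 (by rw [hh, G.invol])
  have hpupw : G.pairing u ≠ G.pairing w := fun hh => hw1 (G.pairing.injective hh).symm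
  have hA2 := not_sc_pairing (p := G.pairing) (m := G.colPerm c) hp2 hm2 G.fixfree
    (colPerm_fixfree G c)
  have hconj := sc_conj_p (p := G.pairing) (m := G.colPerm c) hp2 hm2
  have hmm := sc_m_m (p := G.pairing) (m := G.colPerm c) hp2
  have hpsw := sc_p_swap (p := G.pairing) (m := G.colPerm c) hp2 hm2
  have ne1 : G.colPerm c w ≠ G.colPerm c (G.pairing u) :=
    fun hh => hw2 ((G.colPerm c).injective hh)
  have ne2 : G.colPerm c u ≠ G.colPerm c (G.pairing w) :=
    fun hh => hupw ((G.colPerm c).injective hh)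
  have ne3 : G.colPerm c (G.pairing u) ≠ G.colPerm c (G.pairing w) :=
    fun hh => hpupw ((G.colPerm c).injective hh)
  have ne4 : G.colPerm c u ≠ G.colPerm c w := fun hh => hw1 ((G.colPerm c).injective hh).symm
  have T1 : (G.colPerm c * G.pairing).SameCycle (G.colPerm c u) (G.colPerm c w) ↔
      (G.colPerm c * G.pairing).SameCycle u w := (hmm u w).trans (hconj u w)
  have T2 : (G.colPerm c * G.pairing).SameCycle (G.colPerm c u)
      (G.colPerm c (G.pairing w)) ↔ (G.colPerm c * G.pairing).SameCycle u (G.pairing w) := by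
    have e := hmm u (G.pairing w)
    rw [hp2 w] at e
    exact e.trans (hpsw u w)
  have T3 : (G.colPerm c * G.pairing).SameCycle (G.colPerm c u)
      (G.colPerm c (G.pairing u)) ↔ (G.colPerm c * G.pairing).SameCycle u (G.pairing u) := by
    have e := hmm u (G.pairing u)
    rw [hp2 u] at e
    exact e.trans sameCycle_comm
  have T4 : (G.colPerm c * G.pairing).SameCycle (G.colPerm c (G.pairing u))
      (G.colPerm c (G.pairing w)) ↔ (G.colPerm c * G.pairing).SameCycle u w := by
    have e := hmm (G.pairing u) (G.pairing w)
    rw [hp2 u, hp2 w] at e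
    exact e
  have T5 : (G.colPerm c * G.pairing).SameCycle (G.colPerm c w)
      (G.colPerm c (G.pairing u)) ↔ (G.colPerm c * G.pairing).SameCycle u (G.pairing w) := by
    have e := hmm w (G.pairing u)
    rw [hp2 u] at e
    exact e.trans sameCycle_comm
  have T6 : (G.colPerm c * G.pairing).SameCycle (G.colPerm c (G.pairing u))
      (G.colPerm c w) ↔ (G.colPerm c * G.pairing).SameCycle u (G.pairing w) := by
    have e := hmm (G.pairing u) w
    rw [hp2 u] at e
    exact e
  have hnuw : ¬(G.colPerm c * G.pairing).SameCycle u w :=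
    fun hx => hA2 w (hx.symm.trans h)
  -- flip A
  have f1 : (G.colPerm c * G.pairing).SameCycle (G.colPerm c w) (G.colPerm c (G.pairing u)) :=
    T5.mpr h
  have e1 := cyc_split ne1 f1
  have nx1 : ¬(G.colPerm c * G.pairing).SameCycle (G.colPerm c u)
      (G.colPerm c (G.pairing u)) := fun hx => hA2 u (T3.mp hx)
  have nx2 : ¬(G.colPerm c * G.pairing).SameCycle (G.colPerm c u) (G.colPerm c w) :=
    fun hx => hnuw (T1.mp hx)
  have g1 : (Equiv.swap (G.colPerm c w) (G.colPerm c (G.pairing u)) *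
      (G.colPerm c * G.pairing)).SameCycle (G.colPerm c u) (G.colPerm c (G.pairing w)) :=
    (untouched_iff nx2 nx1 (G.colPerm c (G.pairing w))).mpr (T2.mpr h)
  have e2 := cyc_split ne2 g1
  have hnf := two_mul_numFaces G c
  have hnfA := two_mul_numFaces_flipA G u w c
  rw [flip_sigma_A G u w hw1 hw2 c] at hnfA
  -- flip B
  have f2 : ¬(G.colPerm c * G.pairing).SameCycle (G.colPerm c (G.pairing u))
      (G.colPerm c (G.pairing w)) := fun hx => hnuw (T4.mp hx)
  have e3 := cyc_merge ne3 f2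
  have s1 : (Equiv.swap (G.colPerm c (G.pairing u)) (G.colPerm c (G.pairing w)) *
      (G.colPerm c * G.pairing)).SameCycle (G.colPerm c u) (G.colPerm c (G.pairing w)) :=
    merge_mono f2 (T2.mpr h)
  have s2 : (Equiv.swap (G.colPerm c (G.pairing u)) (G.colPerm c (G.pairing w)) *
      (G.colPerm c * G.pairing)).SameCycle (G.colPerm c (G.pairing w))
      (G.colPerm c (G.pairing u)) := (merge_connect f2).symm
  have s3 : (Equiv.swap (G.colPerm c (G.pairing u)) (G.colPerm c (G.pairing w)) *
      (G.colPerm c * G.pairing)).SameCycle (G.colPerm c (G.pairing u)) (G.colPerm c w) :=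
    merge_mono f2 (T6.mpr h)
  have g2 := (s1.trans s2).trans s3
  have e4 := cyc_split ne4 g2
  have hnfB := two_mul_numFaces_flipB G u w c
  rw [flip_sigma_B G u w hw1 hw2 c] at hnfB
  omega

theorem delta_case_none (hw1 : w ≠ u) (hw2 : w ≠ G.pairing u) (h1 : ¬(G.colPerm c * G.pairing).SameCycle u w)
    (h2 : ¬(G.colPerm c * G.pairing).SameCycle u (G.pairing w)) :
    G.numFaces c = (G.flip u w).numFaces c + 1 ∧
      G.numFaces c = (G.flip u (G.pairing w)).numFaces c + 1 := by
  have hp2 := G.invol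
  have hm2 := colPerm_invol G c
  have hupw : u ≠ G.pairing w := fun hh => hw2 (by rw [hh, G.invol])
  have hpupw : G.pairing u ≠ G.pairing w := fun hh => hw1 (G.pairing.injective hh).symm
  have hA2 := not_sc_pairing (p := G.pairing) (m := G.colPerm c) hp2 hm2 G.fixfree
    (colPerm_fixfree G c)
  have hconj := sc_conj_p (p := G.pairing) (m := G.colPerm c) hp2 hm2
  have hmm := sc_m_m (p := G.pairing) (m := G.colPerm c) hp2
  have hpsw := sc_p_swap (p := G.pairing) (m := G.colPerm c) hp2 hm2
  have ne1 : G.colPerm c w ≠ G.colPerm c (G.pairing u) :=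
    fun hh => hw2 ((G.colPerm c).injective hh)
  have ne2 : G.colPerm c u ≠ G.colPerm c (G.pairing w) :=
    fun hh => hupw ((G.colPerm c).injective hh)
  have ne3 : G.colPerm c (G.pairing u) ≠ G.colPerm c (G.pairing w) :=
    fun hh => hpupw ((G.colPerm c).injective hh)
  have ne4 : G.colPerm c u ≠ G.colPerm c w := fun hh => hw1 ((G.colPerm c).injective hh).symm
  have T1 : (G.colPerm c * G.pairing).SameCycle (G.colPerm c u) (G.colPerm c w) ↔
      (G.colPerm c * G.pairing).SameCycle u w := (hmm u w).trans (hconj u w)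
  have T2 : (G.colPerm c * G.pairing).SameCycle (G.colPerm c u)
      (G.colPerm c (G.pairing w)) ↔ (G.colPerm c * G.pairing).SameCycle u (G.pairing w) := by
    have e := hmm u (G.pairing w)
    rw [hp2 w] at e
    exact e.trans (hpsw u w)
  have T3 : (G.colPerm c * G.pairing).SameCycle (G.colPerm c u)
      (G.colPerm c (G.pairing u)) ↔ (G.colPerm c * G.pairing).SameCycle u (G.pairing u) := by
    have e := hmm u (G.pairing u)
    rw [hp2 u] at e
    exact e.trans sameCycle_comm
  have T4 : (G.colPerm c * G.pairing).SameCycle (G.colPerm c (G.pairing u))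
      (G.colPerm c (G.pairing w)) ↔ (G.colPerm c * G.pairing).SameCycle u w := by
    have e := hmm (G.pairing u) (G.pairing w)
    rw [hp2 u, hp2 w] at e
    exact e
  have T5 : (G.colPerm c * G.pairing).SameCycle (G.colPerm c w)
      (G.colPerm c (G.pairing u)) ↔ (G.colPerm c * G.pairing).SameCycle u (G.pairing w) := by
    have e := hmm w (G.pairing u)
    rw [hp2 u] at e
    exact e.trans sameCycle_comm
  have nx1 : ¬(G.colPerm c * G.pairing).SameCycle (G.colPerm c u)
      (G.colPerm c (G.pairing u)) := fun hx => hA2 u (T3.mp hx)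
  have nxw : ¬(G.colPerm c * G.pairing).SameCycle (G.colPerm c u) (G.colPerm c w) :=
    fun hx => h1 (T1.mp hx)
  have nxpw : ¬(G.colPerm c * G.pairing).SameCycle (G.colPerm c u)
      (G.colPerm c (G.pairing w)) := fun hx => h2 (T2.mp hx)
  -- flip A
  have f1 : ¬(G.colPerm c * G.pairing).SameCycle (G.colPerm c w) (G.colPerm c (G.pairing u)) :=
    fun hx => h2 (T5.mp hx)
  have e1 := cyc_merge ne1 f1
  have ng : ¬(Equiv.swap (G.colPerm c w) (G.colPerm c (G.pairing u)) *
      (G.colPerm c * G.pairing)).SameCycle (G.colPerm c u) (G.colPerm c (G.pairing w)) :=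
    fun hx => nxpw ((untouched_iff nxw nx1 (G.colPerm c (G.pairing w))).mp hx)
  have e2 := cyc_merge ne2 ng
  have hnf := two_mul_numFaces G c
  have hnfA := two_mul_numFaces_flipA G u w c
  rw [flip_sigma_A G u w hw1 hw2 c] at hnfA
  -- flip B
  have f2 : ¬(G.colPerm c * G.pairing).SameCycle (G.colPerm c (G.pairing u))
      (G.colPerm c (G.pairing w)) := fun hx => h1 (T4.mp hx)
  have e3 := cyc_merge ne3 f2
  have ng' : ¬(Equiv.swap (G.colPerm c (G.pairing u)) (G.colPerm c (G.pairing w)) *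
      (G.colPerm c * G.pairing)).SameCycle (G.colPerm c u) (G.colPerm c w) :=
    fun hx => nxw ((untouched_iff nx1 nxpw (G.colPerm c w)).mp hx)
  have e4 := cyc_merge ne4 ng'
  have hnfB := two_mul_numFaces_flipB G u w c
  rw [flip_sigma_B G u w hw1 hw2 c] at hnfB
  omega

end Delta

end FlipProof
namespace FlipProof
open Equiv Equiv.Perm TGraph FlipAux

theorem main_helper (G G' : TGraph) (u w : G.V) (c₁ c₂ c₃ : Fin 3)
    (hc : c₁ ≠ c₂) (hc31 : c₃ ≠ c₁) (hc32 : c₃ ≠ c₂)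
    (huniq : ∀ e : Fin 3, e ≠ c₁ → e ≠ c₂ → e = c₃)
    (h1 : G'.numFaces c₁ = G.numFaces c₁ + 1)
    (h2 : G.numFaces c₂ ≤ G'.numFaces c₂)
    (h3 : G.sameFace c₃ u w → G.numFaces c₃ ≤ G'.numFaces c₃)
    (h4 : ¬G.sameFace c₃ u w → G.numFaces c₃ = G'.numFaces c₃ + 1) :
    G.F ≤ G'.F ∧ (G'.F = G.F → ∀ e, e ≠ c₁ → e ≠ c₂ → ¬ G.sameFace e u w) := by
  classical
  have huniv : (Finset.univ : Finset (Fin 3)) = {c₁, c₂, c₃} := by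
    have hh : ∀ a b d : Fin 3, a ≠ b → d ≠ a → d ≠ b →
        (Finset.univ : Finset (Fin 3)) = {a, b, d} := by decide
    exact hh c₁ c₂ c₃ hc hc31 hc32
  have hsum : ∀ X : TGraph, X.F = X.numFaces c₁ + X.numFaces c₂ + X.numFaces c₃ := by
    intro X
    show ∑ cc : Fin 3, X.numFaces cc = _
    rw [huniv]
    rw [Finset.sum_insert (by simp [hc, Ne.symm hc31]),
      Finset.sum_insert (by simp [Ne.symm hc32]), Finset.sum_singleton]
    omega
  have hF := hsum G
  have hF' := hsum G'
  by_cases h3' : G.sameFace c₃ u w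
  · have hh3 := h3 h3'
    exact ⟨by omega, fun heq e he1 he2 => absurd heq (by omega)⟩
  · have hh4 := h4 h3'
    refine ⟨by omega, fun heq e he1 he2 => ?_⟩
    rw [huniq e he1 he2]
    exact h3'

theorem flip_total_variation' (G : TGraph) (u w : G.V)
    (hw1 : w ≠ u) (hw2 : w ≠ G.pairing u)
    (c₁ c₂ : Fin 3) (hc : c₁ ≠ c₂)
    (h1 : G.sameFace c₁ u w) (h2 : G.sameFace c₂ u w) :
    ∃ G' ∈ ({G.flip u w, G.flip u (G.pairing w)} : Set TGraph),
      G.F ≤ G'.F ∧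
        (G'.F = G.F → ∀ c₃, c₃ ≠ c₁ → c₃ ≠ c₂ → ¬ G.sameFace c₃ u w) := by
  classical
  obtain ⟨c₃, hc31, hc32, huniq⟩ :
      ∃ c₃ : Fin 3, c₃ ≠ c₁ ∧ c₃ ≠ c₂ ∧ ∀ e : Fin 3, e ≠ c₁ → e ≠ c₂ → e = c₃ := by
    have hh : ∀ a b : Fin 3, a ≠ b →
        ∃ d, d ≠ a ∧ d ≠ b ∧ ∀ e, e ≠ a → e ≠ b → e = d := by decide
    exact hh c₁ c₂ hc
  rcases (sameFace_iff G c₁ u w).mp h1 with hA | hB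
  · refine ⟨G.flip u (G.pairing w), Set.mem_insert_of_mem _ rfl, ?_⟩
    have d1 := (delta_case_w G u w c₁ hw1 hw2 hA).2
    have d2 : G.numFaces c₂ ≤ (G.flip u (G.pairing w)).numFaces c₂ := by
      rcases (sameFace_iff G c₂ u w).mp h2 with h2A | h2B
      · have := (delta_case_w G u w c₂ hw1 hw2 h2A).2; omega
      · have := (delta_case_pw G u w c₂ hw1 hw2 h2B).2; omega
    have d3 : G.sameFace c₃ u w → G.numFaces c₃ ≤ (G.flip u (G.pairing w)).numFaces c₃ := by
      intro h3
      rcases (sameFace_iff G c₃ u w).mp h3 with h3A | h3B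
      · have := (delta_case_w G u w c₃ hw1 hw2 h3A).2; omega
      · have := (delta_case_pw G u w c₃ hw1 hw2 h3B).2; omega
    have d4 : ¬G.sameFace c₃ u w →
        G.numFaces c₃ = (G.flip u (G.pairing w)).numFaces c₃ + 1 := by
      intro h3
      have hnor : ¬((G.colPerm c₃ * G.pairing).SameCycle u w ∨
          (G.colPerm c₃ * G.pairing).SameCycle u (G.pairing w)) :=
        fun hor => h3 ((sameFace_iff G c₃ u w).mpr hor)
      exact (delta_case_none G u w c₃ hw1 hw2 (fun hx => hnor (Or.inl hx))
        (fun hx => hnor (Or.inr hx))).2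
    exact main_helper G _ u w c₁ c₂ c₃ hc hc31 hc32 huniq d1 d2 d3 d4
  · refine ⟨G.flip u w, Set.mem_insert _ _, ?_⟩
    have d1 := (delta_case_pw G u w c₁ hw1 hw2 hB).1
    have d2 : G.numFaces c₂ ≤ (G.flip u w).numFaces c₂ := by
      rcases (sameFace_iff G c₂ u w).mp h2 with h2A | h2B
      · have := (delta_case_w G u w c₂ hw1 hw2 h2A).1; omega
      · have := (delta_case_pw G u w c₂ hw1 hw2 h2B).1; omega
    have d3 : G.sameFace c₃ u w → G.numFaces c₃ ≤ (G.flip u w).numFaces c₃ := by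
      intro h3
      rcases (sameFace_iff G c₃ u w).mp h3 with h3A | h3B
      · have := (delta_case_w G u w c₃ hw1 hw2 h3A).1; omega
      · have := (delta_case_pw G u w c₃ hw1 hw2 h3B).1; omega
    have d4 : ¬G.sameFace c₃ u w →
        G.numFaces c₃ = (G.flip u w).numFaces c₃ + 1 := by
      intro h3
      have hnor : ¬((G.colPerm c₃ * G.pairing).SameCycle u w ∨
          (G.colPerm c₃ * G.pairing).SameCycle u (G.pairing w)) :=
        fun hor => h3 ((sameFace_iff G c₃ u w).mpr hor)
      exact (delta_case_none G u w c₃ hw1 hw2 (fun hx => hnor (Or.inl hx))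
        (fun hx => hnor (Or.inr hx))).1
    exact main_helper G _ u w c₁ c₂ c₃ hc hc31 hc32 huniq d1 d2 d3 d4

end FlipProof
/-- If the two (distinct) color-0 edges through `u` and `w` do
not form a 2-edge-cut and lie on a single common face for two distinct colors
`c₁, c₂`, then one of the two flips of this pair of edges does not decrease
the total number of faces, and it can leave the total number of faces
unchanged only if the two edges lie on two distinct faces of the remaining
color `c₃`. -/
theorem flip_total_variation (G : TGraph) (u w : G.V)
    (hw1 : w ≠ u) (hw2 : w ≠ G.pairing u)
    (hcut : ¬ G.CutDisconnects u w)
    (c₁ c₂ : Fin 3) (hc : c₁ ≠ c₂)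
    (h1 : G.sameFace c₁ u w) (h2 : G.sameFace c₂ u w) :
    ∃ G' ∈ ({G.flip u w, G.flip u (G.pairing w)} : Set TGraph),
      G.F ≤ G'.F ∧
        (G'.F = G.F → ∀ c₃, c₃ ≠ c₁ → c₃ ≠ c₂ → ¬ G.sameFace c₃ u w) := by
  exact FlipProof.flip_total_variation' G u w hw1 hw2 c₁ c₂ hc h1 h2
end

section
/- If G is a graph of the tetrahedral model maximizing the number of faces among all graphs with the same number of bubbles, and G has a proper face of length 2 of color c, then G consists of two bubbles joined by a color-c 'dipole' pattern with the remaining four vertices pairwise connected through 2-point functions: vertices v_1,v_2 (and likewise v_3,v_4) adjacent via color-c edges to the face are connected to each other by a 2-point function. -/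
/-!  A combinatorial model of the Feynman graphs of the rank-3 tetrahedral
(`O(N)^3`) tensor model.

A graph consists of a finite set `B` of bubbles (copies of the tetrahedron
`K_4`); each bubble has four vertices, so the vertex set is `B × Fin 4`.
Inside every bubble the edges of colors `1,2,3` are given once and for all by
the three fixed-point-free involutions of `Fin 4` (the proper 3-edge-coloring
of `K_4`).  The color-0 propagator edges, one per vertex, are encoded by a
fixed-point-free involution `pairing` of the vertex set. -/

open Equiv

open TGraph

open TGraph

set_option linter.unusedSectionVars false

section PresSub
variable {V : Type}

/-- The subgroup of permutations preserving a set `S`. -/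
def presSub (S : Set V) : Subgroup (Equiv.Perm V) where
  carrier := {g | ∀ z, z ∈ S ↔ g z ∈ S}
  one_mem' := by intro z; simp
  mul_mem' := by
    intro a b ha hb z
    rw [Equiv.Perm.mul_apply]
    exact (hb z).trans (ha (b z))
  inv_mem' := by
    intro g hg z
    have := hg (g⁻¹ z)
    rw [← Equiv.Perm.mul_apply, mul_inv_cancel, Equiv.Perm.one_apply] at this
    exact this.symm

lemma mem_presSub_of_invol {S : Set V} {g : Equiv.Perm V}
    (hinv : ∀ z, g (g z) = z) (hmap : ∀ z ∈ S, g z ∈ S) : g ∈ presSub S := by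
  intro z
  refine ⟨fun hz => hmap z hz, fun hz => ?_⟩
  have := hmap _ hz
  rwa [hinv] at this

lemma orbit_subset_of_le_presSub {S : Set V} {M : Subgroup (Equiv.Perm V)}
    (hM : M ≤ presSub S) {z : V} (hz : z ∈ S) : MulAction.orbit M z ⊆ S := by
  rintro u ⟨⟨g, hg⟩, rfl⟩
  exact ((hM hg) z).mp hz

end PresSub

namespace TGraph

variable (G : TGraph)

lemma bubblePerm_invol : ∀ (d : Fin 3) (k : Fin 4), bubblePerm d (bubblePerm d k) = k := by
  decide

lemma colPerm_apply (d : Fin 3) (z : G.V) : G.colPerm d z = (z.1, bubblePerm d z.2) := by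
  cases z; rfl

lemma colPerm_colPerm (d : Fin 3) (z : G.V) : G.colPerm d (G.colPerm d z) = z := by
  cases z
  simp [colPerm_apply, bubblePerm_invol]

lemma colPerm_fst (d : Fin 3) (z : G.V) : (G.colPerm d z).1 = z.1 := by
  rw [colPerm_apply]

lemma colPerm_ne (d : Fin 3) (z : G.V) : G.colPerm d z ≠ z := by
  have h : ∀ (d : Fin 3) (k : Fin 4), bubblePerm d k ≠ k := by decide
  rw [colPerm_apply]
  intro hz
  exact h d z.2 (congrArg Prod.snd hz)

lemma colPerm_ne_colPerm {d d' : Fin 3} (hdd' : d ≠ d') (z : G.V) :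
    G.colPerm d z ≠ G.colPerm d' z := by
  have h : ∀ (d d' : Fin 3), d ≠ d' → ∀ (k : Fin 4), bubblePerm d k ≠ bubblePerm d' k := by
    decide
  rw [colPerm_apply, colPerm_apply]
  intro hz
  exact h d d' hdd' z.2 (congrArg Prod.snd hz)

lemma pairing_mem_faceGroup (d : Fin 3) : G.pairing ∈ G.faceGroup d :=
  Subgroup.subset_closure (by simp)

lemma colPerm_mem_faceGroup (d : Fin 3) : G.colPerm d ∈ G.faceGroup d :=
  Subgroup.subset_closure (by simp)

lemma pairing_mem_orbit (d : Fin 3) (z : G.V) :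
    G.pairing z ∈ MulAction.orbit (G.faceGroup d) z :=
  ⟨⟨G.pairing, G.pairing_mem_faceGroup d⟩, rfl⟩

lemma colPerm_mem_orbit (d : Fin 3) (z : G.V) :
    G.colPerm d z ∈ MulAction.orbit (G.faceGroup d) z :=
  ⟨⟨G.colPerm d, G.colPerm_mem_faceGroup d⟩, rfl⟩

lemma orbit_eq_of_mem {d : Fin 3} {u z : G.V}
    (h : u ∈ MulAction.orbit (G.faceGroup d) z) :
    MulAction.orbit (G.faceGroup d) u = MulAction.orbit (G.faceGroup d) z :=
  MulAction.orbit_eq_iff.mpr h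

lemma numFaces_eq_ncard (d : Fin 3) :
    G.numFaces d = (Set.range fun z : G.V => MulAction.orbit (G.faceGroup d) z).ncard := by
  rw [numFaces, ← Nat.card_coe_set_eq]
  apply Nat.card_eq_of_bijective
    (Quotient.lift (fun z : G.V =>
        (⟨MulAction.orbit (G.faceGroup d) z, Set.mem_range_self z⟩ :
          (Set.range fun z : G.V => MulAction.orbit (G.faceGroup d) z)))
      (fun a b hab => by
        simp only [Subtype.mk.injEq]
        exact MulAction.orbit_eq_iff.mpr hab))
  constructor
  · intro q1 q2
    induction q1 using Quotient.inductionOn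
    induction q2 using Quotient.inductionOn
    intro hq
    simp only [Quotient.lift_mk, Subtype.mk.injEq] at hq
    exact Quotient.sound (MulAction.orbit_eq_iff.mp hq)
  · rintro ⟨s, z, rfl⟩
    exact ⟨⟦z⟧, rfl⟩

end TGraph
namespace TGraph

variable (G : TGraph)

lemma flip_pairing_def (x y u : G.V) :
    (G.flip x y).pairing u =
      Equiv.swap (G.pairing x) y (G.pairing (Equiv.swap (G.pairing x) y u)) := rfl

lemma flip_colPerm (x y : G.V) (d : Fin 3) :
    (G.flip x y).colPerm d = G.colPerm d := rfl

lemma flip_b (x y : G.V) : (G.flip x y).b = G.b := rfl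

variable {G}

lemma flip_pairing_x {x y : G.V} (hxy : x ≠ y) :
    (G.flip x y).pairing x = y := by
  rw [flip_pairing_def]
  rw [Equiv.swap_apply_of_ne_of_ne (fun h => G.fixfree x h.symm) hxy,
    Equiv.swap_apply_left]

lemma flip_pairing_y {x y : G.V} (hxy : x ≠ y) :
    (G.flip x y).pairing y = x := by
  rw [flip_pairing_def, Equiv.swap_apply_right, G.invol,
    Equiv.swap_apply_of_ne_of_ne (fun h => G.fixfree x h.symm) hxy]

lemma flip_pairing_px {x y : G.V} (hxy : x ≠ y) :
    (G.flip x y).pairing (G.pairing x) = G.pairing y := by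
  rw [flip_pairing_def, Equiv.swap_apply_left]
  rw [Equiv.swap_apply_of_ne_of_ne (fun h => hxy ((G.pairing.injective h).symm)) (G.fixfree y)]

lemma flip_pairing_py {x y : G.V} (hxy : x ≠ y) :
    (G.flip x y).pairing (G.pairing y) = G.pairing x := by
  rw [flip_pairing_def,
    Equiv.swap_apply_of_ne_of_ne (fun h => hxy (G.pairing.injective h).symm)
      (G.fixfree y), G.invol, Equiv.swap_apply_right]

lemma flip_pairing_other {x y u : G.V}
    (hu : u ∉ ({x, G.pairing x, y, G.pairing y} : Set G.V)) :
    (G.flip x y).pairing u = G.pairing u := by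
  simp only [Set.mem_insert_iff, Set.mem_singleton_iff, not_or] at hu
  obtain ⟨h1, h2, h3, h4⟩ := hu
  rw [flip_pairing_def, Equiv.swap_apply_of_ne_of_ne h2 h3,
    Equiv.swap_apply_of_ne_of_ne
      (fun h => h1 (G.pairing.injective h))
      (fun h => h4 (by rw [← G.invol u, h]))]

end TGraph
namespace TGraph

instance flipMulAction (G : TGraph) (x y : G.V) (d : Fin 3) :
    MulAction (↥((G.flip x y).faceGroup d)) G.V :=
  inferInstanceAs (MulAction (↥((G.flip x y).faceGroup d)) ((G.flip x y).V))

variable {G : TGraph}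

lemma numFaces_flip_eq_ncard (x y : G.V) (d : Fin 3) :
    (G.flip x y).numFaces d =
      (Set.range fun z : G.V => MulAction.orbit ((G.flip x y).faceGroup d) z).ncard :=
  ((G.flip x y).numFaces_eq_ncard d).trans rfl

lemma flip_pairing_mem_orbit (x y : G.V) (d : Fin 3) (z : G.V) :
    (G.flip x y).pairing z ∈ MulAction.orbit ((G.flip x y).faceGroup d) z :=
  ⟨⟨(G.flip x y).pairing, (G.flip x y).pairing_mem_faceGroup d⟩, rfl⟩

lemma flip_colPerm_mem_orbit (x y : G.V) (d : Fin 3) (z : G.V) :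
    G.colPerm d z ∈ MulAction.orbit ((G.flip x y).faceGroup d) z :=
  ⟨⟨(G.flip x y).colPerm d, (G.flip x y).colPerm_mem_faceGroup d⟩, rfl⟩

lemma flip_orbit_eq_of_mem {x y : G.V} {d : Fin 3} {u z : G.V}
    (h : u ∈ MulAction.orbit ((G.flip x y).faceGroup d) z) :
    MulAction.orbit ((G.flip x y).faceGroup d) u
      = MulAction.orbit ((G.flip x y).faceGroup d) z :=
  MulAction.orbit_eq_iff.mpr h

lemma flip_orbit_subset {x y : G.V} {d : Fin 3} {S : Set G.V}
    (hp : ∀ u ∈ S, (G.flip x y).pairing u ∈ S)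
    (hc : ∀ u ∈ S, G.colPerm d u ∈ S)
    {z : G.V} (hz : z ∈ S) :
    MulAction.orbit ((G.flip x y).faceGroup d) z ⊆ S := by
  rintro u ⟨⟨g, hg⟩, rfl⟩
  revert hg
  have : (G.flip x y).faceGroup d ≤ presSub (V := (G.flip x y).V) S := by
    rw [faceGroup, Subgroup.closure_le]
    rintro g (rfl | rfl)
    · exact mem_presSub_of_invol (G.flip x y).invol hp
    · exact mem_presSub_of_invol
        (show ∀ u : G.V, (G.flip x y).colPerm d ((G.flip x y).colPerm d u) = u from
          G.colPerm_colPerm d) hc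
  intro hg
  exact ((this hg) z).mp hz

lemma orbit_subset {d : Fin 3} {S : Set G.V}
    (hp : ∀ u ∈ S, G.pairing u ∈ S)
    (hc : ∀ u ∈ S, G.colPerm d u ∈ S)
    {z : G.V} (hz : z ∈ S) :
    MulAction.orbit (G.faceGroup d) z ⊆ S := by
  rintro u ⟨⟨g, hg⟩, rfl⟩
  revert hg
  have : G.faceGroup d ≤ presSub S := by
    rw [faceGroup, Subgroup.closure_le]
    rintro g (rfl | rfl)
    · exact mem_presSub_of_invol G.invol hp
    · exact mem_presSub_of_invol (G.colPerm_colPerm d) hc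
  intro hg
  exact ((this hg) z).mp hz

/-- If the `G`-orbit (face) of `z` avoids the four flipped vertices, the orbit of `z`
in `G.flip x y` coincides with it. -/
lemma orbit_flip_eq {x y : G.V} (d : Fin 3) (z : G.V)
    (hz : ∀ u ∈ MulAction.orbit (G.faceGroup d) z,
      u ∉ ({x, G.pairing x, y, G.pairing y} : Set G.V)) :
    MulAction.orbit ((G.flip x y).faceGroup d) z = MulAction.orbit (G.faceGroup d) z := by
  set O := MulAction.orbit (G.faceGroup d) z with hO
  have hagree : ∀ u ∈ O, (G.flip x y).pairing u = G.pairing u := fun u hu =>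
    flip_pairing_other (hz u hu)
  have hOcol : ∀ u ∈ O, G.colPerm d u ∈ O := by
    intro u hu
    have := G.colPerm_mem_orbit d u
    rwa [G.orbit_eq_of_mem hu] at this
  have hOpair : ∀ u ∈ O, G.pairing u ∈ O := by
    intro u hu
    have := G.pairing_mem_orbit d u
    rwa [G.orbit_eq_of_mem hu] at this
  have hsub : MulAction.orbit ((G.flip x y).faceGroup d) z ⊆ O :=
    flip_orbit_subset (fun u hu => by rw [hagree u hu]; exact hOpair u hu) hOcol
      (MulAction.mem_orbit_self z)
  refine le_antisymm hsub ?_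
  apply orbit_subset (d := d)
    (fun u hu => by
      rw [← hagree u (hsub hu)]
      have := flip_pairing_mem_orbit x y d u
      rwa [flip_orbit_eq_of_mem hu] at this)
    (fun u hu => by
      have := flip_colPerm_mem_orbit x y d u
      rwa [flip_orbit_eq_of_mem hu] at this)
    (MulAction.mem_orbit_self z)

end TGraph
namespace TGraph

variable {G : TGraph}

lemma numFaces_flip_upper (x y : G.V) (hxy : x ≠ y) (d : Fin 3) :
    G.numFaces d ≤ (G.flip x y).numFaces d + 1 := by
  classical
  set pts : Set G.V := {x, G.pairing x, y, G.pairing y} with hpts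
  set OG : G.V → Set G.V := fun z => MulAction.orbit (G.faceGroup d) z with hOG
  set OH : G.V → Set G.V := fun z => MulAction.orbit ((G.flip x y).faceGroup d) z with hOH
  set U : Set G.V := {z | ∀ u ∈ OG z, u ∉ pts} with hU
  have hUeq : ∀ z ∈ U, OH z = OG z := fun z hz => orbit_flip_eq d z hz
  have hOGsubU : ∀ z ∈ U, OG z ⊆ U := by
    intro z hz u hu
    intro u' hu'
    exact hz u' (show u' ∈ MulAction.orbit (G.faceGroup d) z by
      rw [← G.orbit_eq_of_mem (show u ∈ MulAction.orbit (G.faceGroup d) z from hu)]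
      exact hu')
  have hrangeG : Set.range OG = OG '' U ∪ OG '' Uᶜ := by
    rw [← Set.image_union, Set.union_compl_self, Set.image_univ]
  have hrangeH : Set.range OH = OH '' U ∪ OH '' Uᶜ := by
    rw [← Set.image_union, Set.union_compl_self, Set.image_univ]
  have himageU : OH '' U = OG '' U := Set.image_congr hUeq
  -- the faces meeting the four flipped vertices
  have hTsub : OG '' Uᶜ ⊆ {OG x, OG y} := by
    rintro s ⟨z, hz, rfl⟩
    rw [Set.mem_compl_iff, hU, Set.mem_setOf_eq] at hz
    push_neg at hz
    obtain ⟨u, hu, hupts⟩ := hz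
    have horb : OG z = OG u := (G.orbit_eq_of_mem hu).symm
    rw [hpts] at hupts
    rcases hupts with rfl | rfl | rfl | rfl
    · exact Or.inl horb
    · exact Or.inl (horb.trans (G.orbit_eq_of_mem (G.pairing_mem_orbit d x)))
    · exact Or.inr horb
    · exact Or.inr (horb.trans (G.orbit_eq_of_mem (G.pairing_mem_orbit d y)))
  have hdisj : Disjoint (OH '' U) (OH '' Uᶜ) := by
    rw [Set.disjoint_left]
    rintro s ⟨z1, hz1, rfl⟩ ⟨z2, hz2, hz12⟩
    have : z2 ∈ OH z2 := MulAction.mem_orbit_self z2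
    rw [hz12, hUeq z1 hz1] at this
    exact hz2 (hOGsubU z1 hz1 this)
  have hxU : x ∈ Uᶜ := by
    intro hxmem
    exact hxmem x (MulAction.mem_orbit_self x) (by rw [hpts]; exact Set.mem_insert _ _)
  have h1 : (Set.range OG).ncard ≤ (OG '' U).ncard + 2 := by
    calc (Set.range OG).ncard ≤ (OG '' U).ncard + (OG '' Uᶜ).ncard := by
          rw [hrangeG]; exact Set.ncard_union_le _ _
      _ ≤ (OG '' U).ncard + 2 := by
          have := Set.ncard_le_ncard hTsub (Set.toFinite _)
          have h2 := Set.ncard_insert_le (OG x) {OG y}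
          simp only [Set.ncard_singleton] at h2
          omega
  have h2 : (OG '' U).ncard + 1 ≤ (Set.range OH).ncard := by
    rw [hrangeH, Set.ncard_union_eq hdisj (Set.toFinite _) (Set.toFinite _), himageU]
    have : 0 < (OH '' Uᶜ).ncard := by
      rw [Set.ncard_pos (Set.toFinite _)]
      exact ⟨OH x, Set.mem_image_of_mem _ hxU⟩
    omega
  have hG' : G.numFaces d = (Set.range OG).ncard := G.numFaces_eq_ncard d
  have hH' : (G.flip x y).numFaces d = (Set.range OH).ncard := numFaces_flip_eq_ncard x y d
  rw [hG', hH']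
  omega

lemma numFaces_flip_lower (x y : G.V) (hxy : x ≠ y) (d : Fin 3)
    (hsame : y ∈ MulAction.orbit (G.faceGroup d) x)
    (A : Set G.V) (hxA : x ∈ A) (hpxA : G.pairing x ∉ A)
    (hAcol : ∀ z ∈ A, G.colPerm d z ∈ A)
    (hApair : ∀ z ∈ A, (G.flip x y).pairing z ∈ A) :
    G.numFaces d + 1 ≤ (G.flip x y).numFaces d := by
  classical
  set pts : Set G.V := {x, G.pairing x, y, G.pairing y} with hpts
  set OG : G.V → Set G.V := fun z => MulAction.orbit (G.faceGroup d) z with hOG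
  set OH : G.V → Set G.V := fun z => MulAction.orbit ((G.flip x y).faceGroup d) z with hOH
  set U : Set G.V := {z | ∀ u ∈ OG z, u ∉ pts} with hU
  have hUeq : ∀ z ∈ U, OH z = OG z := fun z hz => orbit_flip_eq d z hz
  have hOGsubU : ∀ z ∈ U, OG z ⊆ U := by
    intro z hz u hu
    intro u' hu'
    exact hz u' (show u' ∈ MulAction.orbit (G.faceGroup d) z by
      rw [← G.orbit_eq_of_mem (show u ∈ MulAction.orbit (G.faceGroup d) z from hu)]
      exact hu')
  have hrangeG : Set.range OG = OG '' U ∪ OG '' Uᶜ := by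
    rw [← Set.image_union, Set.union_compl_self, Set.image_univ]
  have hrangeH : Set.range OH = OH '' U ∪ OH '' Uᶜ := by
    rw [← Set.image_union, Set.union_compl_self, Set.image_univ]
  have himageU : OH '' U = OG '' U := Set.image_congr hUeq
  have hyO : OG y = OG x := G.orbit_eq_of_mem hsame
  have hTsub : OG '' Uᶜ ⊆ {OG x} := by
    rintro s ⟨z, hz, rfl⟩
    rw [Set.mem_compl_iff, hU, Set.mem_setOf_eq] at hz
    push_neg at hz
    obtain ⟨u, hu, hupts⟩ := hz
    have horb : OG z = OG u := (G.orbit_eq_of_mem hu).symm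
    rw [hpts] at hupts
    rcases hupts with rfl | rfl | rfl | rfl
    · exact horb
    · exact horb.trans (G.orbit_eq_of_mem (G.pairing_mem_orbit d x))
    · exact horb.trans hyO
    · exact horb.trans ((G.orbit_eq_of_mem (G.pairing_mem_orbit d y)).trans hyO)
  have hdisj : Disjoint (OH '' U) (OH '' Uᶜ) := by
    rw [Set.disjoint_left]
    rintro s ⟨z1, hz1, rfl⟩ ⟨z2, hz2, hz12⟩
    have : z2 ∈ OH z2 := MulAction.mem_orbit_self z2
    rw [hz12, hUeq z1 hz1] at this
    exact hz2 (hOGsubU z1 hz1 this)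
  have hxU : x ∈ Uᶜ := by
    intro hxmem
    exact hxmem x (MulAction.mem_orbit_self x) (by rw [hpts]; exact Set.mem_insert _ _)
  have hpxU : G.pairing x ∈ Uᶜ := by
    intro hmem
    exact hmem (G.pairing x) (MulAction.mem_orbit_self _)
      (by rw [hpts]; exact Set.mem_insert_iff.mpr (Or.inr (Set.mem_insert _ _)))
  -- the H-orbit of x is contained in A, hence avoids `pairing x`
  have hOHxA : OH x ⊆ A := flip_orbit_subset hApair hAcol hxA
  have hne : OH x ≠ OH (G.pairing x) := by
    intro hEq
    have : G.pairing x ∈ OH x := by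
      rw [hEq]; exact MulAction.mem_orbit_self _
    exact hpxA (hOHxA this)
  have hTsubH : {OH x, OH (G.pairing x)} ⊆ OH '' Uᶜ := by
    rintro s (rfl | rfl)
    · exact Set.mem_image_of_mem _ hxU
    · exact Set.mem_image_of_mem _ hpxU
  have h1 : (Set.range OG).ncard ≤ (OG '' U).ncard + 1 := by
    calc (Set.range OG).ncard ≤ (OG '' U).ncard + (OG '' Uᶜ).ncard := by
          rw [hrangeG]; exact Set.ncard_union_le _ _
      _ ≤ (OG '' U).ncard + 1 := by
          have := Set.ncard_le_ncard hTsub (Set.toFinite _)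
          simp only [Set.ncard_singleton] at this
          omega
  have h2 : (OG '' U).ncard + 2 ≤ (Set.range OH).ncard := by
    rw [hrangeH, Set.ncard_union_eq hdisj (Set.toFinite _) (Set.toFinite _), himageU]
    have := Set.ncard_le_ncard hTsubH (Set.toFinite _)
    rw [Set.ncard_pair hne] at this
    omega
  have hG' : G.numFaces d = (Set.range OG).ncard := G.numFaces_eq_ncard d
  have hH' : (G.flip x y).numFaces d = (Set.range OH).ncard := numFaces_flip_eq_ncard x y d
  rw [hG', hH']
  omega

end TGraph
namespace TGraph

instance flipFullMulAction (G : TGraph) (x y : G.V) :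
    MulAction (↥((G.flip x y).fullGroup)) G.V :=
  inferInstanceAs (MulAction (↥((G.flip x y).fullGroup)) ((G.flip x y).V))

variable {G : TGraph}

lemma flip_connected (x y : G.V)
    (hreach : ∀ a b : G.V, G.reachAvoiding {x, G.pairing x, y, G.pairing y} a b) :
    (G.flip x y).Connected := by
  intro u w
  have key : ∀ m : G.V, G.reachAvoiding {x, G.pairing x, y, G.pairing y} w m →
      m ∈ MulAction.orbit ((G.flip x y).fullGroup) w := by
    intro m hm
    induction hm with
    | refl => exact MulAction.mem_orbit_self _
    | @tail b m h1 h2 ih =>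
      obtain ⟨g', hg'⟩ := ih
      rcases h2 with ⟨ci, hci⟩ | ⟨hpair, hbS, hmS⟩
      · refine ⟨⟨(G.flip x y).colPerm ci,
          Subgroup.subset_closure (Or.inr ⟨ci, rfl⟩)⟩ * g', ?_⟩
        simp only [mul_smul]
        rw [show g' • w = b from hg']
        exact hci.symm
      · refine ⟨⟨(G.flip x y).pairing,
          Subgroup.subset_closure (Or.inl rfl)⟩ * g', ?_⟩
        simp only [mul_smul]
        rw [show g' • w = b from hg']
        show (G.flip x y).pairing b = m
        rw [flip_pairing_other hbS]
        exact hpair.symm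
  exact key u (hreach w u)

lemma exists_third : ∀ c c' : Fin 3, c' ≠ c → ∃ c'' : Fin 3, c'' ≠ c ∧ c'' ≠ c' ∧
    (∀ k : Fin 4, bubblePerm c'' (bubblePerm c' k) = bubblePerm c k) ∧
    (∀ k : Fin 4, bubblePerm c'' (bubblePerm c k) = bubblePerm c' k) := by
  decide

lemma sum_aux {f g : Fin 3 → ℕ} (c c' c'' : Fin 3) (h2 : c' ≠ c) (h3 : c'' ≠ c)
    (h4 : c'' ≠ c')
    (ha : f c ≤ g c + 1) (hb : f c' + 1 ≤ g c') (hc : f c'' + 1 ≤ g c'') :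
    (∑ i, f i) + 1 ≤ ∑ i, g i := by
  fin_cases c <;> fin_cases c' <;> fin_cases c'' <;>
    simp_all [Fin.sum_univ_three] <;> omega

lemma colPerm_comp {c c' c'' : Fin 3}
    (hk : ∀ k : Fin 4, bubblePerm c'' (bubblePerm c' k) = bubblePerm c k) (z : G.V) :
    G.colPerm c'' (G.colPerm c' z) = G.colPerm c z := by
  cases z
  simp [colPerm_apply, hk]

end TGraph

/-- If `G` maximizes the number of faces among connected graphs
with the same number of bubbles and has a proper face of length 2 of color `c`
(through the color-0 edge `{v, pairing v}`), then the remaining four vertices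
of the two bubbles visited by this face are pairwise connected by 2-point
functions: for each color `c' ≠ c`, the vertex attached to `v` by a color-`c'`
edge is connected by a 2-point function to the vertex attached to `pairing v`
by a color-`c'` edge. -/
theorem proper_face2_structure (G : TGraph) (hmax : G.MaximizesFaces)
    (c : Fin 3) (v : G.V) (h : G.ProperFace2 c v) :
    ∀ c' : Fin 3, c' ≠ c →
      G.TwoPoint (G.colPerm c' v) (G.colPerm c' (G.pairing v)) := by
  intro c' hc'c
  obtain ⟨⟨hne2, hface⟩, hbub⟩ := h
  by_contra hTP
  simp only [TwoPoint, not_or] at hTP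
  push_neg at hTP
  obtain ⟨hPxy, hTP2⟩ := hTP
  obtain ⟨c'', hc''c, hc''c', hk1, hk2⟩ := exists_third c c' hc'c
  set w := G.pairing v with hw
  set x := G.colPerm c' v with hx
  set y := G.colPerm c' w with hy
  set a := G.colPerm c v with ha
  set bb := G.colPerm c w with hbb
  have hPw : G.pairing w = v := G.invol v
  have hxfst : x.1 = v.1 := G.colPerm_fst c' v
  have hyfst : y.1 = w.1 := G.colPerm_fst c' w
  have hafst : a.1 = v.1 := G.colPerm_fst c v
  have hbfst : bb.1 = w.1 := G.colPerm_fst c w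
  have hvw1 : w.1 ≠ v.1 := hbub
  have cross : ∀ p q : G.V, p.1 = v.1 → q.1 = w.1 → p ≠ q := by
    intro p q hp hq hEq
    exact hvw1 (by rw [← hq, ← hEq, hp])
  have hxy : x ≠ y := cross x y hxfst hyfst
  have hyx : y ≠ x := hxy.symm
  have hyPx : y ≠ G.pairing x := fun hEq => hPxy hEq.symm
  have hCut : ¬ G.CutDisconnects x y := hTP2 hyx hyPx
  rw [CutDisconnects, not_not] at hCut
  have hPab : G.pairing a = bb := by rw [← hface, G.invol]
  have hxv : x ≠ v := G.colPerm_ne c' v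
  have hyw : y ≠ w := G.colPerm_ne c' w
  have hxa : x ≠ a := G.colPerm_ne_colPerm hc'c v
  have hyb : y ≠ bb := G.colPerm_ne_colPerm hc'c w
  have hxw : x ≠ w := cross x w hxfst rfl
  have hxb : x ≠ bb := cross x bb hxfst hbfst
  have hyv : y ≠ v := (cross v y rfl hyfst).symm
  have hya : y ≠ a := (cross a y hafst hyfst).symm
  have hPxv : G.pairing x ≠ v := fun hEq => hxw (G.pairing.injective (hEq.trans hPw.symm))
  have hPxw : G.pairing x ≠ w := fun hEq => hxv (G.pairing.injective (hEq.trans hw))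
  have hPxa : G.pairing x ≠ a := fun hEq => hxb (G.pairing.injective (hEq.trans hface.symm))
  have hPxb : G.pairing x ≠ bb := fun hEq => hxa (G.pairing.injective (hEq.trans hPab.symm))
  have hPyv : G.pairing y ≠ v := fun hEq => hyw (G.pairing.injective (hEq.trans hPw.symm))
  have hPyw : G.pairing y ≠ w := fun hEq => hyv (G.pairing.injective (hEq.trans hw))
  have hPya : G.pairing y ≠ a := fun hEq => hyb (G.pairing.injective (hEq.trans hface.symm))
  have hPyb : G.pairing y ≠ bb := fun hEq => hya (G.pairing.injective (hEq.trans hPab.symm))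
  have hvpts : v ∉ ({x, G.pairing x, y, G.pairing y} : Set G.V) := by
    simp only [Set.mem_insert_iff, Set.mem_singleton_iff, not_or]
    exact ⟨fun h' => hxv h'.symm, fun h' => hPxv h'.symm,
      fun h' => hyv h'.symm, fun h' => hPyv h'.symm⟩
  have hwpts : w ∉ ({x, G.pairing x, y, G.pairing y} : Set G.V) := by
    simp only [Set.mem_insert_iff, Set.mem_singleton_iff, not_or]
    exact ⟨fun h' => hxw h'.symm, fun h' => hPxw h'.symm,
      fun h' => hyw h'.symm, fun h' => hPyw h'.symm⟩
  have hapts : a ∉ ({x, G.pairing x, y, G.pairing y} : Set G.V) := by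
    simp only [Set.mem_insert_iff, Set.mem_singleton_iff, not_or]
    exact ⟨fun h' => hxa h'.symm, fun h' => hPxa h'.symm,
      fun h' => hya h'.symm, fun h' => hPya h'.symm⟩
  have hbpts : bb ∉ ({x, G.pairing x, y, G.pairing y} : Set G.V) := by
    simp only [Set.mem_insert_iff, Set.mem_singleton_iff, not_or]
    exact ⟨fun h' => hxb h'.symm, fun h' => hPxb h'.symm,
      fun h' => hyb h'.symm, fun h' => hPyb h'.symm⟩
  -- the two faces through x and y of colors c' and c''
  have hsame1 : y ∈ MulAction.orbit (G.faceGroup c') x := by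
    refine ⟨⟨G.colPerm c' * (G.pairing * G.colPerm c'),
      mul_mem (G.colPerm_mem_faceGroup c')
        (mul_mem (G.pairing_mem_faceGroup c') (G.colPerm_mem_faceGroup c'))⟩, ?_⟩
    show G.colPerm c' (G.pairing (G.colPerm c' x)) = y
    rw [hx, G.colPerm_colPerm, ← hw, ← hy]
  have hsame2 : y ∈ MulAction.orbit (G.faceGroup c'') x := by
    refine ⟨⟨G.colPerm c'' * (G.pairing * G.colPerm c''),
      mul_mem (G.colPerm_mem_faceGroup c'')
        (mul_mem (G.pairing_mem_faceGroup c'') (G.colPerm_mem_faceGroup c''))⟩, ?_⟩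
    show G.colPerm c'' (G.pairing (G.colPerm c'' x)) = y
    rw [hx, colPerm_comp hk1, ← ha, hPab, hbb, colPerm_comp hk2, ← hy]
  -- invariant sets for the new length-2 faces of the flip
  have h2 := numFaces_flip_lower x y hxy c' hsame1 ({x, v, w, y} : Set G.V)
    (Set.mem_insert _ _)
    (by
      simp only [Set.mem_insert_iff, Set.mem_singleton_iff, not_or]
      exact ⟨G.fixfree x, hPxv, hPxw, hPxy⟩)
    (by
      intro z hz
      simp only [Set.mem_insert_iff, Set.mem_singleton_iff] at hz ⊢
      rcases hz with rfl | rfl | rfl | rfl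
      · right; left; rw [hx, G.colPerm_colPerm]
      · left; rw [hx]
      · right; right; right; rw [hy]
      · right; right; left; rw [hy, G.colPerm_colPerm])
    (by
      intro z hz
      simp only [Set.mem_insert_iff, Set.mem_singleton_iff] at hz ⊢
      rcases hz with rfl | rfl | rfl | rfl
      · right; right; right; exact flip_pairing_x hxy
      · right; right; left; rw [flip_pairing_other hvpts, ← hw]
      · right; left; rw [flip_pairing_other hwpts, hPw]
      · left; exact flip_pairing_y hxy)
  have h3 := numFaces_flip_lower x y hxy c'' hsame2 ({x, a, bb, y} : Set G.V)
    (Set.mem_insert _ _)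
    (by
      simp only [Set.mem_insert_iff, Set.mem_singleton_iff, not_or]
      exact ⟨G.fixfree x, hPxa, hPxb, hPxy⟩)
    (by
      intro z hz
      simp only [Set.mem_insert_iff, Set.mem_singleton_iff] at hz ⊢
      rcases hz with rfl | rfl | rfl | rfl
      · right; left; rw [hx, colPerm_comp hk1, ← ha]
      · left; rw [ha, colPerm_comp hk2, ← hx]
      · right; right; right; rw [hbb, colPerm_comp hk2, ← hy]
      · right; right; left; rw [hy, colPerm_comp hk1, ← hbb])
    (by
      intro z hz
      simp only [Set.mem_insert_iff, Set.mem_singleton_iff] at hz ⊢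
      rcases hz with rfl | rfl | rfl | rfl
      · right; right; right; exact flip_pairing_x hxy
      · right; right; left; rw [flip_pairing_other hapts, hPab]
      · right; left; rw [flip_pairing_other hbpts, hface]
      · left; exact flip_pairing_y hxy)
  have h1 := numFaces_flip_upper x y hxy c
  have hconn : (G.flip x y).Connected := flip_connected x y hCut
  have hFle : (G.flip x y).F ≤ G.F := hmax.2 (G.flip x y) hconn (flip_b G x y)
  have hFge : G.F + 1 ≤ (G.flip x y).F :=
    sum_aux c c' c'' hc'c hc''c hc''c' h1 h2 h3
  omega
end

section
/- If a connected graph G of the tetrahedral model has a 2-edge-cut {e_L, e_R} of color-0 edges, splitting G into closed graphs G_L and G_R (each obtained by joining the two half-edges on its side into a single color-0 edge), then F(G) = F(G_L) + F(G_R) − 3 and b(G) = b(G_L) + b(G_R). -/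
/-!  A combinatorial model of the Feynman graphs of the rank-3 tetrahedral
(`O(N)^3`) tensor model.

A graph consists of a finite set `B` of bubbles (copies of the tetrahedron
`K_4`); each bubble has four vertices, so the vertex set is `B × Fin 4`.
Inside every bubble the edges of colors `1,2,3` are given once and for all by
the three fixed-point-free involutions of `Fin 4` (the proper 3-edge-coloring
of `K_4`).  The color-0 propagator edges, one per vertex, are encoded by a
fixed-point-free involution `pairing` of the vertex set. -/

open Equiv

open TGraph

open TGraph

section Avoid
variable {V : Type} [Fintype V] [DecidableEq V]

/-- In a finite graph whose edges are given by two fixed-point-free involutions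
`a` and `s`, the endpoints of any `a`-edge are joined by a path avoiding that edge. -/
theorem avoid_reach (a s : Equiv.Perm V)
    (hai : ∀ x, a (a x) = x) (hsi : ∀ x, s (s x) = x)
    (haf : ∀ x, a x ≠ x) (hsf : ∀ x, s x ≠ x) (q : V) :
    Relation.ReflTransGen
      (fun x y => y = s x ∨ (y = a x ∧ x ≠ q ∧ x ≠ a q)) q (a q) := by
  classical
  set step := fun x y => y = s x ∨ (y = a x ∧ x ≠ q ∧ x ≠ a q) with hstep
  -- the alternating walk
  let w : ℕ → V := fun n => Nat.rec (motive := fun _ => V) q (fun j x => if j % 2 = 0 then s x else a x) n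
  have hw0 : w 0 = q := rfl
  have hwsucc : ∀ j, w (j + 1) = if j % 2 = 0 then s (w j) else a (w j) := fun j => rfl
  -- w (2k) = (a ∘ s)^k q
  have hw2 : ∀ k, w (2 * k) = ((a * s : Equiv.Perm V) ^ k) q := by
    intro k
    induction k with
    | zero => simp [hw0]
    | succ k ih =>
      have h1 : 2 * (k + 1) = (2 * k + 1) + 1 := by ring
      rw [h1, hwsucc, hwsucc, if_neg (show ¬(2 * k + 1) % 2 = 0 by omega),
        if_pos (show (2 * k) % 2 = 0 by omega), ih, pow_succ']
      simp [Equiv.Perm.mul_apply]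
  -- existence of a return time
  have hex : ∃ j, 1 ≤ j ∧ (w j = q ∨ w j = a q) := by
    refine ⟨2 * orderOf (a * s : Equiv.Perm V), ?_, ?_⟩
    · have : 0 < orderOf (a * s : Equiv.Perm V) := orderOf_pos _
      omega
    · left; rw [hw2, pow_orderOf_eq_one]; rfl
  let N := Nat.find hex
  have hN : 1 ≤ N ∧ (w N = q ∨ w N = a q) := Nat.find_spec hex
  have hNmin : ∀ j, j < N → ¬(1 ≤ j ∧ (w j = q ∨ w j = a q)) := fun j hj => Nat.find_min hex hj
  -- the walk up to N is a valid path
  have hpath : ∀ j, j ≤ N → Relation.ReflTransGen step q (w j) := by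
    intro j
    induction j with
    | zero => intro _; exact Relation.ReflTransGen.refl
    | succ j ih =>
      intro hj
      refine (ih (by omega)).tail ?_
      rw [hwsucc]
      by_cases hje : j % 2 = 0
      · rw [if_pos hje]; exact Or.inl rfl
      · rw [if_neg hje]
        have hj1 : 1 ≤ j := by omega
        refine Or.inr ⟨rfl, ?_, ?_⟩
        · exact fun h => hNmin j (by omega) ⟨hj1, Or.inl h⟩
        · exact fun h => hNmin j (by omega) ⟨hj1, Or.inr h⟩
  -- N cannot be even
  have hNodd : N % 2 = 1 := by
    by_contra hNe
    have hNe : N % 2 = 0 := by omega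
    have hN2 : 2 ≤ N := by
      rcases Nat.lt_or_ge N 2 with h | h
      · omega
      · exact h
    have hprev : w N = a (w (N - 1)) := by
      have h1 : N = (N - 1) + 1 := by omega
      rw [h1, hwsucc, if_neg (by omega)]
      have h2 : N - 1 + 1 - 1 = N - 1 := by omega
      rw [h2]
    rcases hN.2 with h | h
    · have : w (N - 1) = a q := by
        rw [← h, hprev, hai]
      exact hNmin (N - 1) (by omega) ⟨by omega, Or.inr this⟩
    · have : w (N - 1) = q := by
        have := congrArg a h
        rw [hprev, hai, hai] at this
        exact this
      exact hNmin (N - 1) (by omega) ⟨by omega, Or.inl this⟩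
  -- w N = a q (the reflection argument rules out w N = q)
  have hwN : w N = a q := by
    rcases hN.2 with h | h
    swap
    · exact h
    exfalso
    -- reflection: w (N - j) = w j for all j ≤ N
    have R : ∀ j, j ≤ N → w (N - j) = w j := by
      intro j
      induction j with
      | zero => intro _; simpa [hw0, Nat.sub_zero] using h
      | succ j ih =>
        intro hj
        have h1 : w (N - j) = w j := ih (by omega)
        have h2 : N - j = (N - (j + 1)) + 1 := by omega
        rw [h2, hwsucc] at h1
        rw [hwsucc]
        by_cases hje : j % 2 = 0
        · rw [if_pos (by omega : (N - (j+1)) % 2 = 0)] at h1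
          rw [if_pos hje, ← h1, hsi]
        · rw [if_neg (by omega : ¬ (N - (j+1)) % 2 = 0)] at h1
          rw [if_neg hje, ← h1, hai]
    -- take j = (N-1)/2
    set m := (N - 1) / 2 with hm
    have hmN : m + 1 ≤ N := by omega
    have hRm : w (N - m) = w m := R m (by omega)
    have hNm : N - m = m + 1 := by omega
    rw [hNm, hwsucc] at hRm
    by_cases hme : m % 2 = 0
    · rw [if_pos hme] at hRm; exact hsf (w m) hRm
    · rw [if_neg hme] at hRm; exact haf (w m) hRm
  rw [← hwN]
  exact hpath N le_rfl

end Avoid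


namespace TGraph
variable (G : TGraph)

theorem colPerm_invol (c : Fin 3) (v : G.V) : G.colPerm c (G.colPerm c v) = v := by
  obtain ⟨u, k⟩ := v
  have hk : ∀ j : Fin 4, bubblePerm c (bubblePerm c j) = j := by
    fin_cases c <;> decide
  simp [colPerm, Equiv.prodCongr_apply, hk]

theorem colPerm_fixfree (c : Fin 3) (v : G.V) : G.colPerm c v ≠ v := by
  obtain ⟨u, k⟩ := v
  intro h
  have hk : bubblePerm c k = k := congrArg Prod.snd h
  have hne : ∀ j : Fin 4, bubblePerm c j ≠ j := by
    fin_cases c <;> decide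
  exact hne k hk

/-- One step along a color-0 or color-`c` edge. -/
def stepC (c : Fin 3) (x y : G.V) : Prop :=
  y = G.pairing x ∨ y = G.colPerm c x

theorem stepC_symm (c : Fin 3) : Symmetric (G.stepC c) := by
  rintro x y (h | h)
  · left; rw [h, G.invol]
  · right; rw [h, G.colPerm_invol]

/-- Reachability along edges of colors 0 and `c`. -/
def reachC (c : Fin 3) : G.V → G.V → Prop := Relation.ReflTransGen (G.stepC c)

theorem reachC_refl (c : Fin 3) (x : G.V) : G.reachC c x x := Relation.ReflTransGen.refl

theorem reachC_trans {c : Fin 3} {x y z : G.V} (h1 : G.reachC c x y)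
    (h2 : G.reachC c y z) : G.reachC c x z := h1.trans h2

theorem reachC_symm {c : Fin 3} {x y : G.V} (h : G.reachC c x y) : G.reachC c y x :=
  (@Relation.ReflTransGen.stdSymm _ _ ⟨fun _ _ h' => G.stepC_symm c h'⟩).symm _ _ h

theorem reachC_pairing (c : Fin 3) (x : G.V) : G.reachC c x (G.pairing x) :=
  Relation.ReflTransGen.single (Or.inl rfl)

theorem reachC_col (c : Fin 3) (x : G.V) : G.reachC c x (G.colPerm c x) :=
  Relation.ReflTransGen.single (Or.inr rfl)

/-- Orbit membership for the face group is reachability. -/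
theorem orbit_iff_reachC (c : Fin 3) (u v : G.V) :
    u ∈ MulAction.orbit (G.faceGroup c) v ↔ G.reachC c v u := by
  constructor
  · rintro ⟨⟨g, hg⟩, rfl⟩
    show G.reachC c v (g v)
    have key : ∀ w : G.V, G.reachC c w (g w) := by
      induction hg using Subgroup.closure_induction with
      | mem x hx =>
          intro w
          rcases hx with hx | hx
          · subst hx; exact G.reachC_pairing c w
          · simp only [Set.mem_singleton_iff] at hx
            subst hx; exact G.reachC_col c w
      | one => intro w; exact G.reachC_refl c w
      | mul x y hx hy ihx ihy =>
          intro w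
          exact (ihy w).trans (ihx (y w))
      | inv x hx ihx =>
          intro w
          have h2 := ihx (x⁻¹ w)
          rw [show x (x⁻¹ w) = w by simp] at h2
          exact G.reachC_symm h2
    exact key v
  · intro h
    induction h with
    | refl => exact ⟨1, by simp⟩
    | tail hab hstep ih =>
        rcases ih with ⟨g, hgv⟩
        rcases hstep with h | h
        · refine ⟨⟨G.pairing, Subgroup.subset_closure (by simp)⟩ * g, ?_⟩
          rw [h, ← hgv]; rfl
        · refine ⟨⟨G.colPerm c, Subgroup.subset_closure (by simp)⟩ * g, ?_⟩
          rw [h, ← hgv]; rfl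

end TGraph


namespace TGraph

section GlueAux

variable (H K : TGraph) (p : H.V) (q : K.V)

theorem glue_pairing_apply (z : (glue H K p q).V) :
    (glue H K p q).pairing z = glueFun H K p q z := rfl

theorem glue_col_inl (c : Fin 3) (x : H.V) :
    (glue H K p q).colPerm c (inlV H K x) = inlV H K (H.colPerm c x) := by
  cases x; rfl

theorem glue_col_inr (c : Fin 3) (y : K.V) :
    (glue H K p q).colPerm c (inrV H K y) = inrV H K (K.colPerm c y) := by
  cases y; rfl

theorem glue_pairing_inl (c : Fin 3) (x : H.V) (h1 : x ≠ p) (h2 : x ≠ H.pairing p) :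
    (glue H K p q).pairing (inlV H K x) = inlV H K (H.pairing x) := by
  show glueFun H K p q (inlV H K x) = _
  rw [glueFun_inlV, if_neg h1, if_neg h2]

theorem glue_pairing_inr (c : Fin 3) (y : K.V) (h1 : y ≠ q) (h2 : y ≠ K.pairing q) :
    (glue H K p q).pairing (inrV H K y) = inrV H K (K.pairing y) := by
  show glueFun H K p q (inrV H K y) = _
  rw [glueFun_inrV, if_neg h1, if_neg h2]

/-- The two endpoints of the cut edge on the `H` side are still connected in the
glued graph, going around the face on the `H` side. -/
theorem glue_reach_inl_cut (c : Fin 3) :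
    (glue H K p q).reachC c (inlV H K p) (inlV H K (H.pairing p)) := by
  have h := avoid_reach H.pairing (H.colPerm c) H.invol (H.colPerm_invol c)
    H.fixfree (H.colPerm_fixfree c) p
  refine Relation.ReflTransGen.lift (inlV H K) ?_ _ _ h
  rintro x y (hy | ⟨hy, hx1, hx2⟩)
  · right; rw [hy, glue_col_inl]
  · left; rw [hy, glue_pairing_inl H K p q c x hx1 hx2]

theorem glue_reach_inr_cut (c : Fin 3) :
    (glue H K p q).reachC c (inrV H K q) (inrV H K (K.pairing q)) := by
  have h := avoid_reach K.pairing (K.colPerm c) K.invol (K.colPerm_invol c)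
    K.fixfree (K.colPerm_fixfree c) q
  refine Relation.ReflTransGen.lift (inrV H K) ?_ _ _ h
  rintro x y (hy | ⟨hy, hx1, hx2⟩)
  · right; rw [hy, glue_col_inr]
  · left; rw [hy, glue_pairing_inr H K p q c x hx1 hx2]

/-- Lifting reachability in `H` to the glued graph. -/
theorem glue_reach_inl {c : Fin 3} {x x' : H.V} (h : H.reachC c x x') :
    (glue H K p q).reachC c (inlV H K x) (inlV H K x') := by
  induction h with
  | refl => exact Relation.ReflTransGen.refl
  | tail hab hstep ih =>
      rename_i b b'
      refine ih.trans ?_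
      rcases hstep with h | h
      · by_cases h1 : b = p
        · rw [h, h1]; exact glue_reach_inl_cut H K p q c
        · by_cases h2 : b = H.pairing p
          · rw [h, h2, H.invol]
            exact (glue H K p q).reachC_symm (glue_reach_inl_cut H K p q c)
          · exact Relation.ReflTransGen.single
              (Or.inl (by rw [h, glue_pairing_inl H K p q c b h1 h2]))
      · exact Relation.ReflTransGen.single (Or.inr (by rw [h, glue_col_inl]))

/-- Lifting reachability in `K` to the glued graph. -/
theorem glue_reach_inr {c : Fin 3} {y y' : K.V} (h : K.reachC c y y') :
    (glue H K p q).reachC c (inrV H K y) (inrV H K y') := by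
  induction h with
  | refl => exact Relation.ReflTransGen.refl
  | tail hab hstep ih =>
      rename_i b b'
      refine ih.trans ?_
      rcases hstep with h | h
      · by_cases h1 : b = q
        · rw [h, h1]; exact glue_reach_inr_cut H K p q c
        · by_cases h2 : b = K.pairing q
          · rw [h, h2, K.invol]
            exact (glue H K p q).reachC_symm (glue_reach_inr_cut H K p q c)
          · exact Relation.ReflTransGen.single
              (Or.inl (by rw [h, glue_pairing_inr H K p q c b h1 h2]))
      · exact Relation.ReflTransGen.single (Or.inr (by rw [h, glue_col_inr]))

/-- The relation on the glued graph recording on which side a vertex lies and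
its face there, with the two faces through the cut identified. -/
def sideRel (c : Fin 3) : (glue H K p q).V → (glue H K p q).V → Prop := fun z z' =>
  match z, z' with
  | (Sum.inl u, k), (Sum.inl u', k') => H.reachC c (u, k) (u', k')
  | (Sum.inl u, k), (Sum.inr u', k') => H.reachC c (u, k) p ∧ K.reachC c (u', k') q
  | (Sum.inr u, k), (Sum.inl u', k') => K.reachC c (u, k) q ∧ H.reachC c (u', k') p
  | (Sum.inr u, k), (Sum.inr u', k') => K.reachC c (u, k) (u', k')

theorem sideRel_refl (c : Fin 3) (z : (glue H K p q).V) : sideRel H K p q c z z := by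
  obtain ⟨(u | u), k⟩ := z
  · exact H.reachC_refl c (u, k)
  · exact K.reachC_refl c (u, k)

theorem sideRel_trans {c : Fin 3} {z₁ z₂ z₃ : (glue H K p q).V}
    (h1 : sideRel H K p q c z₁ z₂) (h2 : sideRel H K p q c z₂ z₃) :
    sideRel H K p q c z₁ z₃ := by
  obtain ⟨(u1 | u1), k1⟩ := z₁ <;> obtain ⟨(u2 | u2), k2⟩ := z₂ <;>
    obtain ⟨(u3 | u3), k3⟩ := z₃ <;>
    simp only [sideRel] at *
  · exact h1.trans h2
  · exact ⟨h1.trans h2.1, h2.2⟩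
  · exact h1.1.trans (H.reachC_symm h2.2)
  · exact ⟨h1.1, (K.reachC_symm h2).trans h1.2⟩
  · exact ⟨h1.1, (H.reachC_symm h2).trans h1.2⟩
  · exact h1.1.trans (K.reachC_symm h2.2)
  · exact ⟨h1.trans h2.1, h2.2⟩
  · exact h1.trans h2

theorem stepC_sideRel {c : Fin 3} {z z' : (glue H K p q).V}
    (h : (glue H K p q).stepC c z z') : sideRel H K p q c z z' := by
  obtain ⟨(u | u), k⟩ := z
  · set x : H.V := (u, k) with hx
    rcases h with h | h
    · rw [glue_pairing_apply] at h
      have hfun : glueFun H K p q (inlV H K x) = z' := h.symm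
      rw [glueFun_inlV] at hfun
      by_cases h1 : x = p
      · rw [if_pos h1] at hfun
        subst hfun
        exact ⟨by rw [← hx, h1]; exact H.reachC_refl c p, K.reachC_refl c q⟩
      · by_cases h2 : x = H.pairing p
        · rw [if_neg h1, if_pos h2] at hfun
          subst hfun
          refine ⟨?_, K.reachC_symm (K.reachC_pairing c q)⟩
          rw [← hx, h2]
          exact H.reachC_symm (H.reachC_pairing c p)
        · rw [if_neg h1, if_neg h2] at hfun
          subst hfun
          exact H.reachC_pairing c x
    · have h' : z' = inlV H K (H.colPerm c x) := h.trans (glue_col_inl H K p q c x)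
      subst h'
      exact H.reachC_col c x
  · set y : K.V := (u, k) with hy
    rcases h with h | h
    · rw [glue_pairing_apply] at h
      have hfun : glueFun H K p q (inrV H K y) = z' := h.symm
      rw [glueFun_inrV] at hfun
      by_cases h1 : y = q
      · rw [if_pos h1] at hfun
        subst hfun
        exact ⟨by rw [← hy, h1]; exact K.reachC_refl c q, H.reachC_refl c p⟩
      · by_cases h2 : y = K.pairing q
        · rw [if_neg h1, if_pos h2] at hfun
          subst hfun
          refine ⟨?_, H.reachC_symm (H.reachC_pairing c p)⟩
          rw [← hy, h2]
          exact K.reachC_symm (K.reachC_pairing c q)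
        · rw [if_neg h1, if_neg h2] at hfun
          subst hfun
          exact K.reachC_pairing c y
    · have h' : z' = inrV H K (K.colPerm c y) := h.trans (glue_col_inr H K p q c y)
      subst h'
      exact K.reachC_col c y

theorem reach_sideRel {c : Fin 3} {z z' : (glue H K p q).V}
    (h : (glue H K p q).reachC c z z') : sideRel H K p q c z z' := by
  induction h with
  | refl => exact sideRel_refl H K p q c _
  | tail hab hstep ih =>
      exact sideRel_trans H K p q ih (stepC_sideRel H K p q hstep)

/-- The canonical map from faces of `H` to faces of the glued graph. -/
theorem orbit_of_reach {G : TGraph} {c : Fin 3} {x x' : G.V} (h : G.reachC c x x') :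
    (Quotient.mk'' x : MulAction.orbitRel.Quotient (G.faceGroup c) G.V) = Quotient.mk'' x' := by
  refine Quotient.sound' ?_
  rw [MulAction.orbitRel_apply, G.orbit_iff_reachC]
  exact G.reachC_symm h

theorem reach_of_orbit {G : TGraph} {c : Fin 3} {x x' : G.V}
    (h : (Quotient.mk'' x : MulAction.orbitRel.Quotient (G.faceGroup c) G.V) = Quotient.mk'' x') :
    G.reachC c x x' := by
  have h' := Quotient.exact' h
  rw [MulAction.orbitRel_apply, G.orbit_iff_reachC] at h'
  exact G.reachC_symm h'

theorem numFaces_glue (c : Fin 3) :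
    (glue H K p q).numFaces c + 1 = H.numFaces c + K.numFaces c := by
  classical
  set QG := MulAction.orbitRel.Quotient ((glue H K p q).faceGroup c) (glue H K p q).V with hQG
  set QH := MulAction.orbitRel.Quotient (H.faceGroup c) H.V with hQH
  set QK := MulAction.orbitRel.Quotient (K.faceGroup c) K.V with hQK
  -- the map from faces of `H` and `K` to faces of the glued graph
  have hwdH : ∀ x x' : H.V, (MulAction.orbitRel (H.faceGroup c) H.V) x x' →
      (Quotient.mk'' (inlV H K x) : QG) = Quotient.mk'' (inlV H K x') := by
    intro x x' hxx'
    rw [MulAction.orbitRel_apply, H.orbit_iff_reachC] at hxx'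
    exact orbit_of_reach (glue_reach_inl H K p q (H.reachC_symm hxx'))
  have hwdK : ∀ y y' : K.V, (MulAction.orbitRel (K.faceGroup c) K.V) y y' →
      (Quotient.mk'' (inrV H K y) : QG) = Quotient.mk'' (inrV H K y') := by
    intro y y' hyy'
    rw [MulAction.orbitRel_apply, K.orbit_iff_reachC] at hyy'
    exact orbit_of_reach (glue_reach_inr H K p q (K.reachC_symm hyy'))
  let F0 : QH ⊕ QK → QG :=
    Sum.elim (fun t => Quotient.liftOn' t (fun x => (Quotient.mk'' (inlV H K x) : QG)) hwdH)
      (fun t => Quotient.liftOn' t (fun y => (Quotient.mk'' (inrV H K y) : QG)) hwdK)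
  set b0 : QH ⊕ QK := Sum.inr (Quotient.mk'' q) with hb0
  -- the restriction of `F0` away from the face of `q` in `K` is a bijection
  have hbij : Function.Bijective (fun t : {t : QH ⊕ QK // t ≠ b0} => F0 t.1) := by
    constructor
    · rintro ⟨(t1 | t1), ht1⟩ ⟨(t2 | t2), ht2⟩ heq
      · induction t1 using Quotient.inductionOn' with | h x =>
        induction t2 using Quotient.inductionOn' with | h x' =>
        simp only [F0, Sum.elim_inl, Quotient.liftOn'_mk''] at heq
        have hr := reach_sideRel H K p q (reach_of_orbit heq)
        obtain ⟨u, k⟩ := x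
        obtain ⟨u', k'⟩ := x'
        exact Subtype.ext (congrArg Sum.inl (orbit_of_reach hr))
      · induction t1 using Quotient.inductionOn' with | h x =>
        induction t2 using Quotient.inductionOn' with | h y =>
        simp only [F0, Sum.elim_inl, Sum.elim_inr, Quotient.liftOn'_mk''] at heq
        have hr := reach_sideRel H K p q (reach_of_orbit heq)
        obtain ⟨u, k⟩ := x
        obtain ⟨u', k'⟩ := y
        exact absurd (congrArg Sum.inr (orbit_of_reach hr.2)) ht2
      · induction t1 using Quotient.inductionOn' with | h y =>
        induction t2 using Quotient.inductionOn' with | h x =>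
        simp only [F0, Sum.elim_inl, Sum.elim_inr, Quotient.liftOn'_mk''] at heq
        have hr := reach_sideRel H K p q (reach_of_orbit heq)
        obtain ⟨u, k⟩ := y
        obtain ⟨u', k'⟩ := x
        exact absurd (congrArg Sum.inr (orbit_of_reach hr.1)) ht1
      · induction t1 using Quotient.inductionOn' with | h y =>
        induction t2 using Quotient.inductionOn' with | h y' =>
        simp only [F0, Sum.elim_inr, Quotient.liftOn'_mk''] at heq
        have hr := reach_sideRel H K p q (reach_of_orbit heq)
        obtain ⟨u, k⟩ := y
        obtain ⟨u', k'⟩ := y'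
        exact Subtype.ext (congrArg Sum.inr (orbit_of_reach hr))
    · intro z
      induction z using Quotient.inductionOn' with | h w =>
      obtain ⟨(u | u), k⟩ := w
      · exact ⟨⟨Sum.inl (Quotient.mk'' (u, k)), by simp [hb0]⟩, rfl⟩
      · by_cases hq : (Quotient.mk'' (u, k) : QK) = Quotient.mk'' q
        · refine ⟨⟨Sum.inl (Quotient.mk'' p), by simp [hb0]⟩, ?_⟩
          show (Quotient.mk'' (inlV H K p) : QG) = Quotient.mk'' (inrV H K (u, k))
          refine orbit_of_reach (Relation.ReflTransGen.head (Or.inl ?_)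
            (glue_reach_inr H K p q (K.reachC_symm (reach_of_orbit hq))))
          show inrV H K q = glueFun H K p q (inlV H K p)
          rw [glueFun_inlV, if_pos rfl]
        · exact ⟨⟨Sum.inr (Quotient.mk'' (u, k)), by
            simp only [hb0, ne_eq, Sum.inr.injEq]; exact hq⟩, rfl⟩
  -- conclude on cardinalities
  have hcard : Nat.card QG = Nat.card {t : QH ⊕ QK // t ≠ b0} :=
    (Nat.card_eq_of_bijective _ hbij).symm
  have hsub : Nat.card {t : QH ⊕ QK // t ≠ b0} + 1 = Nat.card (QH ⊕ QK) := by
    have := Fintype.ofFinite (QH ⊕ QK)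
    simp only [Nat.card_eq_fintype_card]
    rw [Fintype.card_subtype_compl (p := fun t => t = b0), Fintype.card_subtype_eq b0]
    have : 1 ≤ Fintype.card (QH ⊕ QK) := Fintype.card_pos_iff.mpr ⟨b0⟩
    omega
  show Nat.card QG + 1 = Nat.card QH + Nat.card QK
  rw [hcard, hsub, Nat.card_sum]

end GlueAux

end TGraph

/-- If a connected graph has a 2-edge-cut of color-0 edges,
splitting it into closed connected graphs `G_L` and `G_R` (so that the graph
is the gluing of `G_L` and `G_R` along one color-0 edge of each), then
`F(G) = F(G_L) + F(G_R) - 3` and `b(G) = b(G_L) + b(G_R)`. -/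
theorem glue_faces_bubbles (H K : TGraph) (p : H.V) (q : K.V)
    (hH : H.Connected) (hK : K.Connected) :
    (glue H K p q).F + 3 = H.F + K.F ∧ (glue H K p q).b = H.b + K.b := by
  constructor
  · show (∑ c : Fin 3, (glue H K p q).numFaces c) + 3 =
      (∑ c : Fin 3, H.numFaces c) + ∑ c : Fin 3, K.numFaces c
    rw [← Finset.sum_add_distrib]
    have h3 : (∑ c : Fin 3, (glue H K p q).numFaces c) + 3 =
        ∑ c : Fin 3, ((glue H K p q).numFaces c + 1) := by
      rw [Finset.sum_add_distrib]
      simp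
    rw [h3]
    exact Finset.sum_congr rfl (fun c _ => numFaces_glue H K p q c)
  · have h1 : (glue H K p q).b = Fintype.card (H.B ⊕ K.B) :=
      Fintype.card_congr (Equiv.refl _)
    rw [h1, Fintype.card_sum]
    rfl
end
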